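/- arXiv:2402.11787 — 4 statements merged into one kernel-verified Lean document; each statement's English description precedes it below -/
import Mathlib

section
/- Let μ > 1 be a real constant and d a positive integer. Let G be a connected graph on n vertices with adjacency matrix A_G such that G is not the complete graph K_{d+1}, A_G + μI is positive semidefinite, the all-ones vector lies in the column space of A_G + μI, and ρ := rank(A_G + μI) ≤ d + 1. Set k = ⌊(d+1)/ρ⌋ and q = d + 1 - ρk. Then there exist real numbers α, β with -1 ≤ β < α < 1, β < 0 and (1-β)/(α-β) = μ, and a spherical {α,β}-code in ℝ^d of size k·n + q. -/
open Matrix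

noncomputable section

/-- The real inner product on `ℝ^d`. -/
def rinner {d : ℕ} (x y : EuclideanSpace ℝ (Fin d)) : ℝ := inner ℝ x y

lemma rinner_comm {d : ℕ} (x y : EuclideanSpace ℝ (Fin d)) : rinner x y = rinner y x :=
  real_inner_comm y x

/-- A spherical `{α, β}`-code in `ℝ^d`: a family of unit vectors whose pairwise inner
products of distinct vectors lie in `{α, β}`. -/
def IsSphericalCode (α β : ℝ) {d n : ℕ} (u : Fin n → EuclideanSpace ℝ (Fin d)) : Prop :=
  (∀ i, ‖u i‖ = 1) ∧ ∀ i j, i ≠ j → rinner (u i) (u j) = α ∨ rinner (u i) (u j) = β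

/-- Adjacency matrix of the associated `α`-graph `Γ_α(S)`. -/
def alphaAdj (α : ℝ) {d n : ℕ} (u : Fin n → EuclideanSpace ℝ (Fin d)) :
    Matrix (Fin n) (Fin n) ℝ :=
  Matrix.of fun i j => if i ≠ j ∧ rinner (u i) (u j) = α then 1 else 0

/-- The associated `α`-graph `Γ_α(S)` of a family of vectors: distinct vectors are
adjacent iff their inner product is `α`. -/
def alphaGraph (α : ℝ) {d n : ℕ} (u : Fin n → EuclideanSpace ℝ (Fin d)) :
    SimpleGraph (Fin n) where
  Adj i j := i ≠ j ∧ rinner (u i) (u j) = α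
  symm := ⟨fun i j h => ⟨h.1.symm, by rw [rinner_comm]; exact h.2⟩⟩
  loopless := ⟨fun i h => h.1 rfl⟩

/- ## Auxiliary lemmas -/

open Module

lemma exists_code_of_finrank_le {E : Type*} [NormedAddCommGroup E] [InnerProductSpace ℝ E]
    [FiniteDimensional ℝ E] {ι : Type*} (x : ι → E) {d : ℕ}
    (h : finrank ℝ (Submodule.span ℝ (Set.range x)) ≤ d) :
    ∃ u : ι → EuclideanSpace ℝ (Fin d), ∀ i j, (inner ℝ (u i) (u j) : ℝ) = inner ℝ (x i) (x j) := by
  set S := Submodule.span ℝ (Set.range x) with hS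
  set a := finrank ℝ S with ha
  let b := stdOrthonormalBasis ℝ S
  let pad : EuclideanSpace ℝ (Fin a) → EuclideanSpace ℝ (Fin d) :=
    fun y => WithLp.toLp 2 (fun j : Fin d => if hj : (j : ℕ) < a then y ⟨j, hj⟩ else 0)
  have pad_inner : ∀ y z : EuclideanSpace ℝ (Fin a),
      (inner ℝ (pad y) (pad z) : ℝ) = inner ℝ y z := by
    intro y z
    simp only [PiLp.inner_apply, RCLike.inner_apply', conj_trivial, pad, PiLp.toLp_apply]
    have key : ∀ j : Fin d,
        ((if hj : (j : ℕ) < a then y ⟨j, hj⟩ else 0) *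
          (if hj : (j : ℕ) < a then z ⟨j, hj⟩ else 0)) =
        (fun m : ℕ => if hm : m < a then y ⟨m, hm⟩ * z ⟨m, hm⟩ else 0) (j : ℕ) := by
      intro j
      by_cases hj : (j : ℕ) < a <;> simp [hj]
    rw [Finset.sum_congr rfl (fun j _ => key j)]
    rw [Fin.sum_univ_eq_sum_range (fun m => if hm : m < a then y ⟨m, hm⟩ * z ⟨m, hm⟩ else 0) d]
    rw [← Finset.sum_subset (Finset.range_subset_range.mpr h)
      (by intro m _ hm; simp at hm; simp [hm])]
    rw [← Fin.sum_univ_eq_sum_range (fun m => if hm : m < a then y ⟨m, hm⟩ * z ⟨m, hm⟩ else 0) a]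
    apply Finset.sum_congr rfl
    intro j _
    simp [j.isLt]
  have hmem : ∀ i, x i ∈ S := fun i => Submodule.subset_span (Set.mem_range_self i)
  refine ⟨fun i => pad (b.repr ⟨x i, hmem i⟩), fun i j => ?_⟩
  rw [pad_inner, b.repr.inner_map_map]
  rfl

variable {k n q : ℕ}

section
open scoped MatrixOrder

def psdSqrt (M : Matrix (Fin n) (Fin n) ℝ) : Matrix (Fin n) (Fin n) ℝ := CFC.sqrt M

lemma psdSqrt_mul_self {M : Matrix (Fin n) (Fin n) ℝ} (h : M.PosSemidef) :
    psdSqrt M * psdSqrt M = M :=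
  CFC.sqrt_mul_sqrt_self M h.nonneg

lemma psdSqrt_herm {M : Matrix (Fin n) (Fin n) ℝ} (_h : M.PosSemidef) :
    (psdSqrt M)ᴴ = psdSqrt M :=
  (CFC.sqrt_nonneg M).posSemidef.isHermitian

end

/-- block vectors: for `v = inl (a,i)`, the vector supported on block `a` equal to `s • (row i of A)`;
for `v = inr m`, the `m`-th extra unit vector. -/
def bigX (s : ℝ) (A : Matrix (Fin n) (Fin n) ℝ) (v : (Fin k × Fin n) ⊕ Fin q) :
    EuclideanSpace ℝ ((Fin k × Fin n) ⊕ Fin q) :=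
  (WithLp.equiv 2 _).symm <| Sum.elim
    (fun bt => match v with
      | Sum.inl ai => if bt.1 = ai.1 then s * A ai.2 bt.2 else 0
      | Sum.inr _ => 0)
    (fun m' => match v with
      | Sum.inl _ => 0
      | Sum.inr m => if m' = m then 1 else 0)

def bigE (s : ℝ) (cv : Fin n → ℝ) : EuclideanSpace ℝ ((Fin k × Fin n) ⊕ Fin q) :=
  (WithLp.equiv 2 _).symm <| Sum.elim (fun bt => cv bt.2) (fun _ => s)

lemma bigX_inner_inl_inl (s : ℝ) (A : Matrix (Fin n) (Fin n) ℝ) (a a' : Fin k) (i i' : Fin n) :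
    (inner ℝ (bigX (q := q) s A (Sum.inl (a, i))) (bigX s A (Sum.inl (a', i'))) : ℝ) =
      if a = a' then s^2 * ∑ t, A i t * A i' t else 0 := by
  simp only [PiLp.inner_apply, RCLike.inner_apply', conj_trivial, bigX,
    WithLp.equiv_symm_apply, PiLp.toLp_apply, Fintype.sum_sum_type, Sum.elim_inl, Sum.elim_inr,
    Fintype.sum_prod_type]
  simp only [mul_zero, Finset.sum_const_zero, add_zero]
  have key : ∀ b : Fin k, ∑ t, (if b = a then s * A i t else 0) * (if b = a' then s * A i' t else 0)
      = if b = a then (if b = a' then ∑ t, (s * A i t) * (s * A i' t) else 0) else 0 := by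
    intro b
    split_ifs <;> simp
  rw [Finset.sum_congr rfl fun b _ => key b, Finset.sum_ite_eq' Finset.univ a]
  simp only [Finset.mem_univ, if_true]
  split_ifs with h
  · rw [Finset.mul_sum]; exact Finset.sum_congr rfl fun t _ => by ring
  · rfl

lemma bigX_inner_inl_inr (s : ℝ) (A : Matrix (Fin n) (Fin n) ℝ) (a : Fin k) (i : Fin n)
    (m : Fin q) :
    (inner ℝ (bigX s A (Sum.inl (a, i))) (bigX s A (Sum.inr m)) : ℝ) = 0 := by
  simp [PiLp.inner_apply, bigX, WithLp.equiv_symm_apply, PiLp.toLp_apply, Fintype.sum_sum_type]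

lemma bigX_inner_inr_inr (s : ℝ) (A : Matrix (Fin n) (Fin n) ℝ) (m m' : Fin q) :
    (inner ℝ (bigX (k := k) s A (Sum.inr m)) (bigX s A (Sum.inr m')) : ℝ) =
      if m = m' then 1 else 0 := by
  simp only [PiLp.inner_apply, RCLike.inner_apply', conj_trivial, bigX,
    WithLp.equiv_symm_apply, PiLp.toLp_apply, Fintype.sum_sum_type, Sum.elim_inl, Sum.elim_inr]
  simp only [mul_zero, zero_mul, Finset.sum_const_zero, zero_add, Fintype.sum_prod_type]
  have key : ∀ m'' : Fin q, (if m'' = m then (1:ℝ) else 0) * (if m'' = m' then 1 else 0)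
      = if m'' = m then (if m = m' then 1 else 0) else 0 := by
    intro m''
    split_ifs with h1 h2 h3 <;> simp_all
  rw [Finset.sum_congr rfl fun m'' _ => key m'', Finset.sum_ite_eq' Finset.univ m]
  simp

lemma bigX_inner_bigE_inl (s : ℝ) (A : Matrix (Fin n) (Fin n) ℝ) (cv : Fin n → ℝ)
    (a : Fin k) (i : Fin n) :
    (inner ℝ (bigX (q := q) s A (Sum.inl (a, i))) (bigE s cv) : ℝ) = s * ∑ t, A i t * cv t := by
  simp only [PiLp.inner_apply, RCLike.inner_apply', conj_trivial, bigX, bigE,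
    WithLp.equiv_symm_apply, PiLp.toLp_apply, Fintype.sum_sum_type, Sum.elim_inl, Sum.elim_inr,
    Fintype.sum_prod_type]
  simp only [zero_mul, Finset.sum_const_zero, add_zero]
  have key : ∀ b : Fin k, ∑ t, (if b = a then s * A i t else 0) * cv t
      = if b = a then s * ∑ t, A i t * cv t else 0 := by
    intro b
    split_ifs with h
    · rw [Finset.mul_sum]; exact Finset.sum_congr rfl fun t _ => by ring
    · simp
  rw [Finset.sum_congr rfl fun b _ => key b, Finset.sum_ite_eq' Finset.univ a]
  simp

lemma bigX_inner_bigE_inr (s : ℝ) (A : Matrix (Fin n) (Fin n) ℝ) (cv : Fin n → ℝ) (m : Fin q) :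
    (inner ℝ (bigX (k := k) s A (Sum.inr m)) (bigE s cv) : ℝ) = s := by
  simp only [PiLp.inner_apply, RCLike.inner_apply', conj_trivial, bigX, bigE,
    WithLp.equiv_symm_apply, PiLp.toLp_apply, Fintype.sum_sum_type, Sum.elim_inl, Sum.elim_inr,
    Fintype.sum_prod_type]
  simp [Finset.sum_ite_eq' Finset.univ m]

lemma bigE_inner_bigE (s : ℝ) (cv : Fin n → ℝ) :
    (inner ℝ (bigE (k := k) (q := q) s cv) (bigE s cv) : ℝ) =
      k * (∑ t, cv t * cv t) + q * s^2 := by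
  simp only [PiLp.inner_apply, RCLike.inner_apply', conj_trivial, bigE,
    WithLp.equiv_symm_apply, PiLp.toLp_apply, Fintype.sum_sum_type, Sum.elim_inl, Sum.elim_inr,
    Fintype.sum_prod_type]
  simp [Finset.sum_const, pow_two, mul_assoc]

/-- The linear map whose range contains all the `bigX` vectors. -/
def bigL (k q : ℕ) (U : Submodule ℝ (Fin n → ℝ)) :
    ((Fin k → U) × (Fin q → ℝ)) →ₗ[ℝ] EuclideanSpace ℝ ((Fin k × Fin n) ⊕ Fin q) where
  toFun p := (WithLp.equiv 2 _).symm <|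
    Sum.elim (fun bt => (p.1 bt.1 : Fin n → ℝ) bt.2) (fun m => p.2 m)
  map_add' p p' := by
    ext c
    rcases c with bt | m <;>
      simp [WithLp.equiv_symm_apply, PiLp.toLp_apply, PiLp.add_apply]
  map_smul' r p := by
    ext c
    rcases c with bt | m <;>
      simp [WithLp.equiv_symm_apply, PiLp.toLp_apply, PiLp.smul_apply]

lemma bigX_mem_range (s : ℝ) (A : Matrix (Fin n) (Fin n) ℝ) (v : (Fin k × Fin n) ⊕ Fin q) :
    bigX s A v ∈ LinearMap.range (bigL k q (Submodule.span ℝ (Set.range A))) := by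
  rcases v with ⟨a, i⟩ | m
  · refine ⟨⟨fun b => if b = a then
      ⟨s • A i, Submodule.smul_mem _ s (Submodule.subset_span (Set.mem_range_self i))⟩
      else 0, 0⟩, ?_⟩
    ext c
    rcases c with ⟨b, t⟩ | m <;>
      simp only [bigL, LinearMap.coe_mk, AddHom.coe_mk, bigX,
        WithLp.equiv_symm_apply, PiLp.toLp_apply, Sum.elim_inl, Sum.elim_inr]
    · by_cases h : b = a <;> simp [h]
    · simp
  · exact ⟨⟨0, fun m' => if m' = m then 1 else 0⟩, by
      ext c
      rcases c with ⟨b, t⟩ | m' <;>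
        simp [bigL, bigX, WithLp.equiv_symm_apply, PiLp.toLp_apply]⟩

lemma finrank_range_bigL_le (U : Submodule ℝ (Fin n → ℝ)) :
    finrank ℝ (LinearMap.range (bigL k q U)) ≤ k * finrank ℝ U + q := by
  calc finrank ℝ (LinearMap.range (bigL k q U))
      ≤ finrank ℝ ((Fin k → U) × (Fin q → ℝ)) := (bigL k q U).finrank_range_le
    _ = k * finrank ℝ U + q := by
        rw [Module.finrank_prod, Module.finrank_pi_fintype, Module.finrank_pi]
        simp [Finset.sum_const, Fintype.card_fin, mul_comm]

lemma norm_eq_one_of_inner_self {E : Type*} [NormedAddCommGroup E] [InnerProductSpace ℝ E]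
    (x : E) (h : (inner ℝ x x : ℝ) = 1) : ‖x‖ = 1 := by
  have h2 : ‖x‖ * ‖x‖ = 1 := by rw [← real_inner_self_eq_norm_mul_norm, h]
  rcases mul_self_eq_one_iff.mp h2 with h3 | h3
  · exact h3
  · nlinarith [norm_nonneg x]

lemma arith_inv_le (μ γ : ℝ) (hμ0 : 0 < μ) (h : 1 ≤ μ * γ) : μ⁻¹ ≤ γ := by
  rw [inv_eq_one_div, div_le_iff₀ hμ0]
  nlinarith

lemma arith_two_inv_le (μ γ : ℝ) (hμ0 : 0 < μ) (h : 4 ≤ 2 * μ * γ) : 2 * μ⁻¹ ≤ γ := by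
  have h1 : μ⁻¹ * (2 * μ * γ) = 2 * γ := by
    field_simp
  nlinarith [inv_pos.mpr hμ0, mul_le_mul_of_nonneg_left h (inv_pos.mpr hμ0).le]

lemma arith_Tbound1 (μ γ kR qR : ℝ) (hμ0 : 0 < μ) (hγμ : μ⁻¹ ≤ γ) (hk : 1 ≤ kR)
    (hqR : 0 ≤ qR) (hkq : 2 ≤ kR + qR) : 2 * μ⁻¹ ≤ kR * γ + qR * μ⁻¹ := by
  have hinv : (0:ℝ) ≤ μ⁻¹ := (inv_pos.mpr hμ0).le
  have e1 : 0 ≤ (kR + qR - 2) * μ⁻¹ := mul_nonneg (by linarith) hinv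
  have e2 : 0 ≤ kR * (γ - μ⁻¹) := mul_nonneg (by linarith) (by linarith)
  nlinarith [e1, e2]

lemma arith_Tbound2 (μ γ kR qR : ℝ) (hμ0 : 0 < μ) (hγ2 : 2 * μ⁻¹ ≤ γ) (hk : 1 ≤ kR)
    (hqR : 0 ≤ qR) : 2 * μ⁻¹ ≤ kR * γ + qR * μ⁻¹ := by
  have hinv : (0:ℝ) ≤ μ⁻¹ := (inv_pos.mpr hμ0).le
  have e1 : 0 ≤ qR * μ⁻¹ := mul_nonneg hqR hinv
  have e2 : 0 ≤ (kR - 1) * γ := mul_nonneg (by linarith) (by linarith)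
  nlinarith [e1, e2]

lemma arith_final (μ tv : ℝ) (hμ : 1 < μ) (ht0 : 0 < tv) (ht12 : tv ≤ 1/2) :
    -1 ≤ -tv/(1-tv) ∧ -tv/(1-tv) < (μ⁻¹-tv)/(1-tv) ∧ (μ⁻¹-tv)/(1-tv) < 1 ∧ -tv/(1-tv) < 0 ∧
    (1 - (-tv/(1-tv)))/((μ⁻¹-tv)/(1-tv) - (-tv/(1-tv))) = μ := by
  have hμ0 : 0 < μ := by linarith
  have h1t : 0 < 1 - tv := by linarith
  have hμinv1 : μ⁻¹ < 1 := by
    rw [inv_eq_one_div, div_lt_one hμ0]; exact hμ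
  have hμinv0 : 0 < μ⁻¹ := inv_pos.mpr hμ0
  have h1tne : (1:ℝ) - tv ≠ 0 := h1t.ne'
  have hμne : μ ≠ 0 := hμ0.ne'
  refine ⟨?_, ?_, ?_, ?_, ?_⟩
  · rw [le_div_iff₀ h1t]; linarith
  · rw [div_lt_div_iff₀ h1t h1t]; nlinarith
  · rw [div_lt_one h1t]; linarith
  · exact div_neg_of_neg_of_pos (by linarith) h1t
  · rw [div_eq_iff]
    · field_simp
      ring_nf
      try tauto
    · have hden : (μ⁻¹-tv)/(1-tv) - (-tv/(1-tv)) = μ⁻¹/(1-tv) := by ring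
      rw [hden]
      positivity

set_option maxHeartbeats 3000000 in
/-- from a connected graph `G ≠ K_{d+1}` with `A_G + μI` positive
semidefinite, all-ones vector in the column space, and `ρ = rank(A_G + μI) ≤ d + 1`, one
obtains reals `-1 ≤ β < α < 1`, `β < 0` with `(1-β)/(α-β) = μ` and a spherical
`{α,β}`-code in `ℝ^d` of size `k·n + q`, where `k = ⌊(d+1)/ρ⌋` and `q = d + 1 - ρk`. -/
theorem stmt13 (μ : ℝ) (hμ : 1 < μ) (d n : ℕ) (hd : 0 < d)
    (G : SimpleGraph (Fin n)) [DecidableRel G.Adj]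
    (hconn : G.Connected)
    (hnotK : ¬ Nonempty (G ≃g (⊤ : SimpleGraph (Fin (d + 1)))))
    (M : Matrix (Fin n) (Fin n) ℝ)
    (hM : M = G.adjMatrix ℝ + μ • (1 : Matrix (Fin n) (Fin n) ℝ))
    (hpsd : M.PosSemidef)
    (hj : ∃ x : Fin n → ℝ, M *ᵥ x = fun _ => 1)
    (ρ : ℕ) (hρ : ρ = M.rank) (hρd : ρ ≤ d + 1)
    (k q : ℕ) (hk : k = (d + 1) / ρ) (hq : q = d + 1 - ρ * k) :
    ∃ α β : ℝ, -1 ≤ β ∧ β < α ∧ α < 1 ∧ β < 0 ∧ (1 - β) / (α - β) = μ ∧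
      ∃ u : Fin (k * n + q) → EuclideanSpace ℝ (Fin d), IsSphericalCode α β u := by
  classical
  obtain ⟨z, hz⟩ := hj
  obtain ⟨i₀⟩ := hconn.nonempty
  have hμ0 : (0 : ℝ) < μ := by linarith
  -- the square root of M
  set A := psdSqrt M with hAdef
  have hAA : A * A = M := psdSqrt_mul_self hpsd
  have hAH : Aᴴ = A := psdSqrt_herm hpsd
  have hAsymm : ∀ a b, A a b = A b a := by
    intro a b
    conv_lhs => rw [← hAH]
    simp [Matrix.conjTranspose_apply]
  have gram : ∀ i j, ∑ t, A i t * A j t = M i j := by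
    intro i j
    rw [← hAA, Matrix.mul_apply]
    exact Finset.sum_congr rfl fun t _ => by rw [hAsymm j t]
  -- the center vector
  set cv : Fin n → ℝ := A *ᵥ z with hcv
  have hAc : ∀ i, ∑ t, A i t * cv t = 1 := by
    intro i
    have : A *ᵥ cv = fun _ => 1 := by
      rw [hcv, Matrix.mulVec_mulVec, hAA, hz]
    calc ∑ t, A i t * cv t = (A *ᵥ cv) i := rfl
      _ = 1 := by rw [this]
  set γ : ℝ := ∑ t, cv t * cv t with hγdef
  -- diagonal and off-diagonal entries of M
  have hMdiag : ∀ i, M i i = μ := by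
    intro i
    simp [hM, Matrix.one_apply]
  have hMoff : ∀ i j, i ≠ j → M i j = if G.Adj i j then 1 else 0 := by
    intro i j hij
    simp [hM, Matrix.one_apply, hij]
  -- basic positivity
  have hρpos : 0 < ρ := by
    rcases Nat.eq_zero_or_pos ρ with h0 | h
    · exfalso
      have hr : M.rank = 0 := by omega
      have hmem : (fun _ => (1:ℝ)) ∈ LinearMap.range M.mulVecLin :=
        ⟨z, by rw [Matrix.mulVecLin_apply, hz]⟩
      rw [Matrix.rank, Submodule.finrank_eq_zero] at hr
      rw [hr] at hmem
      simpa using congrFun hmem i₀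
    · exact h
  have hk1 : 1 ≤ k := hk ▸ (Nat.one_le_div_iff hρpos).mpr hρd
  have hkρ : k * ρ ≤ d + 1 := hk ▸ Nat.div_mul_le_self (d + 1) ρ
  have hsum : ρ * k + q = d + 1 := by
    rw [hq, mul_comm ρ k]
    omega
  -- Cauchy-Schwarz estimates via Euclidean space
  set wE : Fin n → EuclideanSpace ℝ (Fin n) := fun i => (WithLp.equiv 2 _).symm (A i) with hwE
  set cE : EuclideanSpace ℝ (Fin n) := (WithLp.equiv 2 _).symm cv with hcE
  have hinner_w : ∀ i j, (inner ℝ (wE i) (wE j) : ℝ) = M i j := by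
    intro i j
    simp only [hwE, PiLp.inner_apply, RCLike.inner_apply', conj_trivial,
      WithLp.equiv_symm_apply, PiLp.toLp_apply]
    exact gram i j
  have hinner_wc : ∀ i, (inner ℝ (wE i) cE : ℝ) = 1 := by
    intro i
    simp only [hwE, hcE, PiLp.inner_apply, RCLike.inner_apply', conj_trivial,
      WithLp.equiv_symm_apply, PiLp.toLp_apply]
    exact hAc i
  have hinner_cc : (inner ℝ cE cE : ℝ) = γ := by
    simp only [hcE, PiLp.inner_apply, RCLike.inner_apply', conj_trivial,
      WithLp.equiv_symm_apply, PiLp.toLp_apply]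
    exact hγdef.symm
  have hnw : ∀ i, ‖wE i‖ * ‖wE i‖ = μ := by
    intro i
    rw [← real_inner_self_eq_norm_mul_norm, hinner_w, hMdiag]
  have hnc : ‖cE‖ * ‖cE‖ = γ := by
    rw [← real_inner_self_eq_norm_mul_norm, hinner_cc]
  clear_value A cv γ wE cE
  have hγ1 : 1 ≤ μ * γ := by
    have h1 : (1:ℝ) ≤ ‖wE i₀‖ * ‖cE‖ := by
      have := abs_real_inner_le_norm (wE i₀) cE
      rw [hinner_wc i₀] at this
      simpa using this
    nlinarith [norm_nonneg (wE i₀), norm_nonneg cE, hnw i₀, hnc]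
  have hγ0 : 0 < γ := by nlinarith
  -- main bound: T ≥ 2/μ
  have hT2 : 2 * μ⁻¹ ≤ k * γ + q * μ⁻¹ := by
    by_cases hcomp : ∀ i j : Fin n, i ≠ j → G.Adj i j
    · -- G is complete: M is positive definite, so ρ = n, and G ≠ K_{d+1} forces ρ ≤ d.
      have hMij : ∀ i j, M i j = if i = j then μ else 1 := by
        intro i j
        by_cases h : i = j
        · subst h; simp [hMdiag i]
        · rw [hMoff i j h, if_neg h, if_pos (hcomp i j h)]
      have hPD : M.PosDef := by
        refine Matrix.PosDef.of_dotProduct_mulVec_pos hpsd.isHermitian fun x hx => ?_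
        have hexp : (star x) ⬝ᵥ (M *ᵥ x) = (∑ i, x i)^2 + (μ - 1) * ∑ i, x i * x i := by
          simp only [star_trivial, dotProduct, Matrix.mulVec, dotProduct]
          have hrow : ∀ i, ∑ j, M i j * x j = (∑ j, x j) + (μ - 1) * x i := by
            intro i
            have : ∀ j, M i j * x j = x j + (if j = i then (μ - 1) * x j else 0) := by
              intro j
              rw [hMij]
              by_cases h : i = j
              · subst h; simp; ring
              · simp [h, Ne.symm h]
            rw [Finset.sum_congr rfl fun j _ => this j, Finset.sum_add_distrib,
              Finset.sum_ite_eq' Finset.univ i]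
            simp
          rw [Finset.sum_congr rfl fun i _ => by rw [hrow i]]
          have hsplit : ∑ i, x i * ((∑ j, x j) + (μ - 1) * x i)
              = (∑ i, x i * (∑ j, x j)) + ∑ i, (μ - 1) * (x i * x i) := by
            rw [← Finset.sum_add_distrib]
            exact Finset.sum_congr rfl fun i _ => by ring
          rw [hsplit, ← Finset.sum_mul, ← Finset.mul_sum, sq]
        have hxs : 0 < ∑ i, x i * x i := by
          obtain ⟨j, hj⟩ := Function.ne_iff.mp hx
          refine Finset.sum_pos' (fun i _ => mul_self_nonneg (x i)) ⟨j, Finset.mem_univ j, ?_⟩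
          simpa using mul_self_pos.mpr hj
        rw [hexp]
        nlinarith [sq_nonneg (∑ i, x i)]
      have hrankn : M.rank = n := by
        rw [Matrix.rank_of_isUnit]
        · simp
        · exact (Matrix.isUnit_iff_isUnit_det M).mpr (isUnit_iff_ne_zero.mpr (ne_of_gt hPD.det_pos))
      have hρn : ρ = n := by rw [hρ, hrankn]
      have hρled : ρ ≤ d := by
        rcases Nat.lt_or_ge ρ (d + 1) with h | h
        · omega
        · exfalso
          have hnd : n = d + 1 := by omega
          refine hnotK ⟨⟨finCongr hnd, ?_⟩⟩
          intro a b
          simp only [SimpleGraph.top_adj, ne_eq, EmbeddingLike.apply_eq_iff_eq]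
          constructor
          · intro hab; exact hcomp a b hab
          · intro hab; exact G.ne_of_adj hab
      have hkq2 : 2 ≤ k + q := by
        rcases Nat.lt_or_ge k 2 with h2 | h2
        · have hk1' : k = 1 := by omega
          rw [hk1'] at hq
          omega
        · omega
      have hγμ : μ⁻¹ ≤ γ := arith_inv_le μ γ hμ0 hγ1
      have hkq2' : (2:ℝ) ≤ (k:ℝ) + (q:ℝ) := by exact_mod_cast hkq2
      have hinv : (0:ℝ) < μ⁻¹ := inv_pos.mpr hμ0
      exact arith_Tbound1 μ γ k q hμ0 hγμ ((Nat.one_le_cast (α := ℝ)).mpr hk1)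
        (Nat.cast_nonneg q) hkq2'
    · push_neg at hcomp
      obtain ⟨i, j, hij, hnadj⟩ := hcomp
      have hMij0 : M i j = 0 := by rw [hMoff i j hij, if_neg hnadj]
      have hMji0 : M j i = 0 := by
        rw [hMoff j i (Ne.symm hij), if_neg (fun h => hnadj (G.adj_symm h))]
      have h2 : (2:ℝ) ≤ ‖wE i + wE j‖ * ‖cE‖ := by
        have := abs_real_inner_le_norm (wE i + wE j) cE
        rw [inner_add_left, hinner_wc i, hinner_wc j] at this
        norm_num at this
        exact this
      have h3 : ‖wE i + wE j‖ * ‖wE i + wE j‖ = 2 * μ := by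
        rw [← real_inner_self_eq_norm_mul_norm]
        rw [inner_add_left, inner_add_right, inner_add_right, hinner_w, hinner_w,
          hinner_w, hinner_w, hMij0, hMji0, hMdiag, hMdiag]
        ring
      have hγ2 : 2 * μ⁻¹ ≤ γ := by
        have h4 : (4:ℝ) ≤ 2 * μ * γ := by
          nlinarith [norm_nonneg (wE i + wE j), norm_nonneg cE]
        exact arith_two_inv_le μ γ hμ0 h4
      have hinv : (0:ℝ) < μ⁻¹ := inv_pos.mpr hμ0
      exact arith_Tbound2 μ γ k q hμ0 hγ2 ((Nat.one_le_cast (α := ℝ)).mpr hk1)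
        (Nat.cast_nonneg q)
  -- ## Construction of the code
  obtain ⟨s, hs0, hs2⟩ : ∃ s : ℝ, 0 < s ∧ s * s = μ⁻¹ :=
    ⟨(Real.sqrt μ)⁻¹, by positivity, by rw [← mul_inv, Real.mul_self_sqrt hμ0.le]⟩
  set T : ℝ := k * γ + q * μ⁻¹ with hTdef
  have hT0 : 0 < T := lt_of_lt_of_le (by positivity) hT2
  set xv : ((Fin k × Fin n) ⊕ Fin q) → EuclideanSpace ℝ ((Fin k × Fin n) ⊕ Fin q) :=
    bigX (k := k) (q := q) s A with hxvdef
  set ev : EuclideanSpace ℝ ((Fin k × Fin n) ⊕ Fin q) :=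
    bigE (k := k) (q := q) s cv with hevdef
  have hg_ll : ∀ (a a' : Fin k) (i i' : Fin n),
      (inner ℝ (xv (Sum.inl (a,i))) (xv (Sum.inl (a',i'))) : ℝ)
        = if a = a' then μ⁻¹ * M i i' else 0 := by
    intro a a' i i'
    rw [hxvdef, bigX_inner_inl_inl]
    split_ifs
    · rw [gram, sq, hs2]
    · rfl
  have hg_lr : ∀ (a : Fin k) (i : Fin n) (m : Fin q),
      (inner ℝ (xv (Sum.inl (a,i))) (xv (Sum.inr m)) : ℝ) = 0 := by
    intro a i m
    rw [hxvdef]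
    exact bigX_inner_inl_inr s A a i m
  have hg_rr : ∀ (m m' : Fin q),
      (inner ℝ (xv (Sum.inr m)) (xv (Sum.inr m')) : ℝ) = if m = m' then 1 else 0 := by
    intro m m'
    rw [hxvdef]
    exact bigX_inner_inr_inr s A m m'
  have hg_diag : ∀ v, (inner ℝ (xv v) (xv v) : ℝ) = 1 := by
    rintro (⟨a,i⟩|m)
    · rw [hg_ll, if_pos rfl, hMdiag i, inv_mul_cancel₀ hμ0.ne']
    · rw [hg_rr, if_pos rfl]
  have hxe : ∀ v, (inner ℝ (xv v) ev : ℝ) = s := by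
    rintro (⟨a,i⟩|m)
    · rw [hxvdef, hevdef, bigX_inner_bigE_inl, hAc, mul_one]
    · rw [hxvdef, hevdef]
      exact bigX_inner_bigE_inr s A cv m
  have hee : (inner ℝ ev ev : ℝ) = T := by
    rw [hevdef, bigE_inner_bigE, hTdef, sq, hs2, ← hγdef]
  have hex : ∀ v, (inner ℝ ev (xv v) : ℝ) = s := fun v => (real_inner_comm _ _).trans (hxe v)
  clear_value xv ev
  -- the shift parameters
  set r : ℝ := s / T with hrdef
  set tv : ℝ := μ⁻¹ / T with htvdef
  have hrT : r * T = s := by rw [hrdef]; field_simp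
  have hsr : s * r = tv := by rw [hrdef, htvdef, ← hs2]; ring
  have ht0 : 0 < tv := div_pos (inv_pos.mpr hμ0) hT0
  have ht12 : tv ≤ 1/2 := by
    rw [htvdef, div_le_iff₀ hT0]
    linarith
  have h1t : 0 < 1 - tv := by linarith
  clear_value T r tv
  set yv : ((Fin k × Fin n) ⊕ Fin q) → EuclideanSpace ℝ ((Fin k × Fin n) ⊕ Fin q) :=
    fun v => xv v - r • ev with hyvdef
  have hyy : ∀ v v', (inner ℝ (yv v) (yv v') : ℝ) = inner ℝ (xv v) (xv v') - tv := by
    intro v v'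
    rw [hyvdef]
    simp only [inner_sub_left, inner_sub_right, real_inner_smul_left, real_inner_smul_right,
      hee, hxe, hex]
    rw [hrT, mul_comm r s, hsr]
    ring
  have hye : ∀ v, (inner ℝ (yv v) ev : ℝ) = 0 := by
    intro v
    rw [hyvdef]
    simp only [inner_sub_left, real_inner_smul_left, hxe, hee]
    rw [hrT]
    ring
  clear_value yv
  obtain ⟨c₁, hc₁2⟩ : ∃ c₁ : ℝ, c₁ * c₁ = (1 - tv)⁻¹ :=
    ⟨(Real.sqrt (1 - tv))⁻¹, by rw [← mul_inv, Real.mul_self_sqrt h1t.le]⟩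
  set uv : ((Fin k × Fin n) ⊕ Fin q) → EuclideanSpace ℝ ((Fin k × Fin n) ⊕ Fin q) :=
    fun v => c₁ • yv v with huvdef
  have huu : ∀ v v', (inner ℝ (uv v) (uv v') : ℝ)
      = (1 - tv)⁻¹ * (inner ℝ (xv v) (xv v') - tv) := by
    intro v v'
    rw [huvdef]
    simp only [real_inner_smul_left, real_inner_smul_right]
    rw [hyy, ← mul_assoc, hc₁2]
  clear_value uv
  -- ## dimension bound
  have hAT : Aᵀ = A := by
    ext a b
    rw [Matrix.transpose_apply]
    exact hAsymm b a
  set U : Submodule ℝ (Fin n → ℝ) := Submodule.span ℝ (Set.range A) with hUdef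
  have hU : finrank ℝ U = ρ := by
    rw [hρ, ← hAA, show A * A = A * Aᵀ by rw [hAT], Matrix.rank_self_mul_transpose,
      Matrix.rank_eq_finrank_span_cols, Matrix.col, hAT, ← hUdef]
  clear_value U
  set SS := LinearMap.range (bigL k q U) with hSSdef
  clear_value SS
  have hxS : ∀ v, xv v ∈ SS := by
    intro v
    rw [hxvdef, hSSdef, hUdef]
    exact bigX_mem_range s A v
  have hcvU : cv ∈ U := by
    have hcveq : cv = ∑ j, z j • A j := by
      funext t
      rw [hcv]
      simp only [Matrix.mulVec, dotProduct, Finset.sum_apply, Pi.smul_apply,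
        smul_eq_mul]
      exact Finset.sum_congr rfl fun j _ => by rw [hAsymm t j]; ring
    rw [hcveq, hUdef]
    exact Submodule.sum_mem _ fun j _ => Submodule.smul_mem _ _
      (Submodule.subset_span ⟨j, rfl⟩)
  have heS : ev ∈ SS := by
    rw [hSSdef]
    refine ⟨⟨fun _ => ⟨cv, hcvU⟩, fun _ => s⟩, ?_⟩
    rw [hevdef]
    ext c
    rcases c with ⟨b,t⟩ | m <;>
      simp [bigL, bigE, WithLp.equiv_symm_apply, PiLp.toLp_apply]
  have hSSrank : finrank ℝ SS ≤ k * ρ + q := by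
    rw [hSSdef, ← hU]
    exact finrank_range_bigL_le U
  have hene : ev ≠ 0 := by
    intro h0
    rw [h0, inner_zero_right] at hee
    exact hT0.ne hee
  set S' := SS ⊓ (Submodule.span ℝ {ev})ᗮ with hS'def
  clear_value S'
  have hyS' : ∀ v, yv v ∈ S' := by
    intro v
    rw [hS'def]
    refine Submodule.mem_inf.mpr ⟨?_, ?_⟩
    · rw [hyvdef]
      exact Submodule.sub_mem _ (hxS v) (Submodule.smul_mem _ _ heS)
    · refine Submodule.mem_orthogonal_singleton_iff_inner_right.mpr ?_
      rw [← hye v]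
      exact real_inner_comm (yv v) ev
  have hfr : finrank ℝ S' ≤ d := by
    have h1 : S' ⊓ (Submodule.span ℝ {ev}) = ⊥ := by
      have h2 : S' ⊓ (Submodule.span ℝ {ev}) ≤
          (Submodule.span ℝ {ev})ᗮ ⊓ (Submodule.span ℝ {ev}) :=
        inf_le_inf_right _ (hS'def ▸ inf_le_right)
      have h3 : (Submodule.span ℝ {ev})ᗮ ⊓ (Submodule.span ℝ {ev}) = ⊥ := by
        rw [inf_comm]
        exact disjoint_iff.mp (Submodule.orthogonal_disjoint _)
      exact le_bot_iff.mp (h3 ▸ h2)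
    have h2 : finrank ℝ (Submodule.span ℝ {ev}) = 1 := finrank_span_singleton hene
    have h3 := Submodule.finrank_sup_add_finrank_inf_eq S' (Submodule.span ℝ {ev})
    rw [h1, h2, finrank_bot, add_zero] at h3
    have h4 : S' ⊔ Submodule.span ℝ {ev} ≤ SS :=
      sup_le (hS'def ▸ inf_le_left) ((Submodule.span_le).mpr (by simpa using heS))
    have h5 : finrank ℝ ↥(S' ⊔ Submodule.span ℝ {ev}) ≤ k * ρ + q :=
      le_trans (Submodule.finrank_mono h4) hSSrank
    have h6 : k * ρ = ρ * k := mul_comm k ρ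
    omega
  have huspan : finrank ℝ (Submodule.span ℝ (Set.range uv)) ≤ d := by
    refine le_trans (Submodule.finrank_mono ?_) hfr
    rw [Submodule.span_le]
    rintro _ ⟨v, rfl⟩
    rw [huvdef]
    exact Submodule.smul_mem _ _ (hyS' v)
  obtain ⟨u', hu'⟩ := exists_code_of_finrank_le uv huspan
  -- ## final packaging
  obtain ⟨hf1, hf2, hf3, hf4, hf5⟩ := arith_final μ tv hμ ht0 ht12
  refine ⟨(μ⁻¹ - tv)/(1 - tv), -tv/(1 - tv), hf1, hf2, hf3, hf4, hf5, ?_⟩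
  set eqv : Fin (k * n + q) ≃ ((Fin k × Fin n) ⊕ Fin q) :=
    finSumFinEquiv.symm.trans (Equiv.sumCongr finProdFinEquiv.symm (Equiv.refl (Fin q)))
    with heqv
  refine ⟨fun i => u' (eqv i), ?_, ?_⟩
  · intro i
    apply norm_eq_one_of_inner_self
    rw [hu', huu, hg_diag]
    exact inv_mul_cancel₀ h1t.ne'
  · intro i j hij
    have hvv : eqv i ≠ eqv j := fun h => hij (eqv.injective h)
    show (inner ℝ (u' (eqv i)) (u' (eqv j)) : ℝ) = _ ∨ (inner ℝ (u' (eqv i)) (u' (eqv j)) : ℝ) = _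
    rw [hu', huu]
    rcases hv : eqv i with ⟨a, ii⟩ | m <;> rcases hw : eqv j with ⟨a', jj⟩ | m'
    · rw [hg_ll]
      by_cases ha : a = a'
      · subst ha
        have hii : ii ≠ jj := by
          intro h
          apply hvv
          rw [hv, hw, h]
        rw [if_pos rfl, hMoff ii jj hii]
        by_cases hadj : G.Adj ii jj
        · left
          rw [if_pos hadj, mul_one, div_eq_inv_mul]
        · right
          rw [if_neg hadj, mul_zero, zero_sub, neg_div, div_eq_inv_mul]
          ring
      · right
        rw [if_neg ha, zero_sub, neg_div, div_eq_inv_mul]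
        ring
    · right
      rw [hg_lr, zero_sub, neg_div, div_eq_inv_mul]
      ring
    · right
      rw [real_inner_comm, hg_lr, zero_sub, neg_div, div_eq_inv_mul]
      ring
    · right
      have hmm : m ≠ m' := by
        intro h
        apply hvv
        rw [hv, hw, h]
      rw [hg_rr, if_neg hmm, zero_sub, neg_div, div_eq_inv_mul]
      ring
end
end

section
/- Let -1 ≤ β < α < 1 with β < 0, and set α₀ = α/(1+α) and β₀ = (β - α²)/(1 - α²). Suppose m is a real number such that every spherical {α₀,β₀}-code in ℝ^d has size at most m. Then every spherical {α,β}-code in ℝ^d has size at most ((α-β)/(-β)) · (m + (1-β)/(α-β)). -/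
open Matrix

noncomputable section

lemma rinner_expand {d : ℕ} (c α : ℝ) (x y v : EuclideanSpace ℝ (Fin d)) :
    rinner (c • (x - α • v)) (c • (y - α • v)) =
      c * c * (rinner x y - α * rinner x v - α * rinner v y + α * α * rinner v v) := by
  simp only [rinner, inner_sub_left, inner_sub_right, real_inner_smul_left,
    real_inner_smul_right]
  ring

lemma rinner_self {d : ℕ} (x : EuclideanSpace ℝ (Fin d)) : rinner x x = ‖x‖ ^ 2 :=
  real_inner_self_eq_norm_sq x

set_option maxHeartbeats 800000 in
/-- if every spherical `{α₀,β₀}`-code in `ℝ^d` has size at most `m`, where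
`α₀ = α/(1+α)` and `β₀ = (β-α²)/(1-α²)`, then every spherical `{α,β}`-code in `ℝ^d` has
size at most `((α-β)/(-β))·(m + (1-β)/(α-β))`. -/
theorem stmt15 (d : ℕ)
    (α β α₀ β₀ : ℝ) (hβ₁ : -1 ≤ β) (hβα : β < α) (hα : α < 1) (hβ₀ : β < 0)
    (hα₀ : α₀ = α / (1 + α)) (hβ₀' : β₀ = (β - α ^ 2) / (1 - α ^ 2))
    (m : ℝ)
    (hm : ∀ (n : ℕ) (u : Fin n → EuclideanSpace ℝ (Fin d)),
      IsSphericalCode α₀ β₀ u → (n : ℝ) ≤ m) :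
    ∀ (n : ℕ) (u : Fin n → EuclideanSpace ℝ (Fin d)), IsSphericalCode α β u →
      (n : ℝ) ≤ (α - β) / (-β) * (m + (1 - β) / (α - β)) := by
  intro n u hu
  obtain ⟨hnorm, hip⟩ := hu
  have hα1 : -1 < α := lt_of_le_of_lt hβ₁ hβα
  have hα2 : (0:ℝ) < 1 - α ^ 2 := by nlinarith
  have hm0 : (0:ℝ) ≤ m := by
    have := hm 0 (fun _ => 0) ⟨fun i => i.elim0, fun i => i.elim0⟩
    simpa using this
  have hαβ : (0:ℝ) < α - β := by linarith
  have hβneg : (0:ℝ) < -β := by linarith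
  have hβne : β ≠ 0 := ne_of_lt hβ₀
  have hαβne : α - β ≠ 0 := ne_of_gt hαβ
  have hT : (α - β) / (-β) * (m + (1 - β) / (α - β)) = ((α - β) * m + (1 - β)) / (-β) := by
    field_simp
  rw [hT, le_div_iff₀ hβneg]
  rcases Nat.eq_zero_or_pos n with hn | hn
  · subst hn; simp; nlinarith
  have hn1 : (1:ℝ) ≤ n := by exact_mod_cast hn
  have hnpos : (0:ℝ) < n := by linarith
  have hdiag : ∀ i, rinner (u i) (u i) = 1 := by
    intro i; rw [rinner_self, hnorm i]; norm_num
  -- the α-neighborhoods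
  set N : Fin n → Finset (Fin n) := fun i =>
    Finset.univ.filter (fun j => j ≠ i ∧ rinner (u i) (u j) = α) with hN
  -- degree bound via projection
  have hdeg : ∀ i, ((N i).card : ℝ) ≤ m := by
    intro i
    set c : ℝ := (Real.sqrt (1 - α ^ 2))⁻¹ with hc
    have hs : Real.sqrt (1 - α ^ 2) ^ 2 = 1 - α ^ 2 := Real.sq_sqrt hα2.le
    have hcc : c * c = (1 - α ^ 2)⁻¹ := by
      rw [hc, ← mul_inv]
      congr 1
      nlinarith
    set w : Fin n → EuclideanSpace ℝ (Fin d) := fun j => c • (u j - α • u i) with hw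
    have hmem : ∀ j ∈ N i, j ≠ i ∧ rinner (u i) (u j) = α := by
      intro j hj
      simpa [hN] using hj
    have hinner : ∀ j k, j ∈ N i → k ∈ N i →
        rinner (w j) (w k) = (rinner (u j) (u k) - α ^ 2) * (1 - α ^ 2)⁻¹ := by
      intro j k hj hk
      obtain ⟨hj1, hj2⟩ := hmem j hj
      obtain ⟨hk1, hk2⟩ := hmem k hk
      have hji : rinner (u j) (u i) = α := by rw [rinner_comm]; exact hj2
      rw [hw, rinner_expand, hji, hk2, hdiag i, hcc]
      ring
    have hwnorm : ∀ j ∈ N i, ‖w j‖ = 1 := by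
      intro j hj
      have h1 : rinner (w j) (w j) = 1 := by
        rw [hinner j j hj hj, hdiag j]
        field_simp
      have h2 : ‖w j‖ ^ 2 = 1 := by rw [← rinner_self]; exact h1
      have := norm_nonneg (w j)
      nlinarith
    set e := (N i).equivFin with he
    have hcode : IsSphericalCode α₀ β₀ (fun t => w (e.symm t : Fin n)) := by
      constructor
      · intro t; exact hwnorm _ (e.symm t).2
      · intro t s hts
        have hne : ((e.symm t : Fin n)) ≠ ((e.symm s : Fin n)) :=
          fun h => hts (e.symm.injective (Subtype.ext h))
        rw [hinner _ _ (e.symm t).2 (e.symm s).2]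
        rcases hip _ _ hne with h | h
        · left
          rw [h, hα₀]
          have h1 : (1:ℝ) + α ≠ 0 := by nlinarith
          have h2 : (1:ℝ) - α ^ 2 ≠ 0 := ne_of_gt hα2
          field_simp
          ring
        · right
          rw [h, hβ₀', div_eq_mul_inv]
    exact hm (N i).card (fun t => w (e.symm t : Fin n)) hcode
  -- row sums
  have hrow : ∀ i : Fin n, ∑ j ∈ Finset.univ.erase i, rinner (u i) (u j)
      = β * ((Finset.univ.erase i).card : ℝ) + (α - β) * ((N i).card : ℝ) := by
    intro i
    have hsplit : ∀ j ∈ Finset.univ.erase i, rinner (u i) (u j)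
        = β + (if rinner (u i) (u j) = α then (α - β) else 0) := by
      intro j hj
      have hji : j ≠ i := Finset.ne_of_mem_erase hj
      rcases hip i j (Ne.symm hji) with h | h
      · rw [h]; simp
      · rw [h]
        have hne : β ≠ α := ne_of_lt hβα
        simp [hne]
    rw [Finset.sum_congr rfl hsplit, Finset.sum_add_distrib, Finset.sum_const,
      ← Finset.sum_filter]
    have hfil : (Finset.univ.erase i).filter (fun j => rinner (u i) (u j) = α) = N i := by
      ext j
      simp [hN, Finset.mem_erase, and_comm]
    rw [hfil, Finset.sum_const]
    simp [mul_comm]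
  -- positivity of the Gram sum
  have hS : (0:ℝ) ≤ ∑ i, ∑ j, rinner (u i) (u j) := by
    have h : ∑ i, ∑ j, rinner (u i) (u j) = rinner (∑ i, u i) (∑ j, u j) := by
      simp only [rinner, inner_sum, sum_inner]
      exact Finset.sum_comm
    rw [h, rinner_self]
    positivity
  have hcard : ∀ i : Fin n, ((Finset.univ.erase i).card : ℝ) = (n : ℝ) - 1 := by
    intro i
    rw [Finset.card_erase_of_mem (Finset.mem_univ i), Finset.card_univ, Fintype.card_fin,
      Nat.cast_sub hn, Nat.cast_one]
  have hdouble : ∑ i, ∑ j, rinner (u i) (u j)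
      = (n : ℝ) + β * (n : ℝ) * ((n:ℝ) - 1) + (α - β) * ∑ i, ((N i).card : ℝ) := by
    have hrow' : ∀ i : Fin n, ∑ j, rinner (u i) (u j)
        = 1 + (β * ((n:ℝ) - 1) + (α - β) * ((N i).card : ℝ)) := by
      intro i
      rw [← Finset.add_sum_erase _ _ (Finset.mem_univ i), hdiag i, hrow i, hcard i]
    rw [Finset.sum_congr rfl (fun i _ => hrow' i)]
    simp only [Finset.sum_add_distrib, Finset.sum_const, ← Finset.mul_sum,
      Finset.card_univ, Fintype.card_fin, nsmul_eq_mul, mul_one]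
    ring
  have hsumdeg : ∑ i, ((N i).card : ℝ) ≤ (n : ℝ) * m := by
    calc ∑ i, ((N i).card : ℝ) ≤ ∑ _i : Fin n, m := Finset.sum_le_sum (fun i _ => hdeg i)
    _ = (n:ℝ) * m := by simp [Finset.card_univ, mul_comm]
  rw [hdouble] at hS
  have key : (0:ℝ) ≤ (n:ℝ) * (((α - β) * m + (1 - β)) - (n:ℝ) * (-β)) := by nlinarith
  nlinarith [key, hnpos, mul_pos hnpos hnpos]
end
end

section
/- Let d ≥ 2 be an integer and let -1 ≤ β < α < 1 with β < 0. If (α-β)/(-β) < 1 + 1/(d-1), then every spherical {α,β}-code in ℝ^d has size at most max{d+1, ((-α)/(α-β) + 1/d)⁻¹ · (1-β)/(α-β)}. -/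
open Matrix

noncomputable section

open Finset

/-- Caro–Wei: there is an independent set `I` with `∑_{v∈S} 1/(1+deg_S v) ≤ #I`. -/
lemma caroWei {V : Type*} [DecidableEq V] (adj : V → V → Prop) [DecidableRel adj]
    (hsymm : ∀ a b, adj a b → adj b a) (hirr : ∀ a, ¬ adj a a) (S : Finset V) :
    ∃ I : Finset V, I ⊆ S ∧ (∀ a ∈ I, ∀ b ∈ I, ¬ adj a b) ∧
      ∑ v ∈ S, (1 : ℝ) / (1 + (#(S.filter (adj v)) : ℝ)) ≤ #I := by
  induction S using Finset.strongInduction with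
  | _ S ih =>
    rcases S.eq_empty_or_nonempty with rfl | hne
    · exact ⟨∅, by simp⟩
    obtain ⟨v, hvS, hmin⟩ := S.exists_min_image (fun w => #(S.filter (adj w))) hne
    set N : Finset V := insert v (S.filter (adj v)) with hN
    have hNS : N ⊆ S := insert_subset hvS (filter_subset _ _)
    have hssub : S \ N ⊂ S := by
      refine Finset.ssubset_iff_of_subset (sdiff_subset) |>.mpr ⟨v, hvS, ?_⟩
      simp [hN]
    obtain ⟨I', hI'sub, hI'ind, hI'sum⟩ := ih (S \ N) hssub
    have hvI' : v ∉ I' := fun h => by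
      have := hI'sub h
      simp [hN] at this
    refine ⟨insert v I', ?_, ?_, ?_⟩
    · exact insert_subset hvS ((hI'sub).trans sdiff_subset)
    · intro a ha b hb
      have key : ∀ x ∈ I', ¬ adj v x := by
        intro x hx hadj
        have hxS : x ∈ S := (hI'sub.trans sdiff_subset) hx
        have : x ∈ N := mem_insert_of_mem (mem_filter.mpr ⟨hxS, hadj⟩)
        have := (mem_sdiff.mp (hI'sub hx)).2
        exact this ‹x ∈ N›
      rcases mem_insert.mp ha with rfl | ha' <;> rcases mem_insert.mp hb with rfl | hb'
      · exact hirr _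
      · exact key _ hb'
      · exact fun h => key _ ha' (hsymm _ _ h)
      · exact hI'ind _ ha' _ hb'
    · have hcard : #(insert v I') = #I' + 1 := card_insert_of_notMem hvI'
      have hsplit := Finset.sum_sdiff (f := fun w => (1:ℝ)/(1 + (#(S.filter (adj w)) : ℝ))) hNS
      have hb1 : ∑ w ∈ S \ N, (1:ℝ)/(1 + (#(S.filter (adj w)) : ℝ)) ≤ #I' := by
        refine le_trans (Finset.sum_le_sum ?_) hI'sum
        intro w hw
        have hsub : (S \ N).filter (adj w) ⊆ S.filter (adj w) :=
          filter_subset_filter _ sdiff_subset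
        have hle : (#((S \ N).filter (adj w)) : ℝ) ≤ #(S.filter (adj w)) := by
          exact_mod_cast card_le_card hsub
        apply one_div_le_one_div_of_le
        · positivity
        · linarith
      have hb2 : ∑ w ∈ N, (1:ℝ)/(1 + (#(S.filter (adj w)) : ℝ)) ≤ 1 := by
        have hNcard : #N = #(S.filter (adj v)) + 1 := by
          rw [hN, card_insert_of_notMem]
          simp [hirr v]
        have step : ∀ w ∈ N, (1:ℝ)/(1 + (#(S.filter (adj w)) : ℝ))
            ≤ 1/(1 + (#(S.filter (adj v)) : ℝ)) := by
          intro w hw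
          have hwS : w ∈ S := hNS hw
          have := hmin w hwS
          have : (#(S.filter (adj v)) : ℝ) ≤ #(S.filter (adj w)) := by exact_mod_cast this
          apply one_div_le_one_div_of_le
          · positivity
          · linarith
        calc ∑ w ∈ N, (1:ℝ)/(1 + (#(S.filter (adj w)) : ℝ))
            ≤ ∑ w ∈ N, (1:ℝ)/(1 + (#(S.filter (adj v)) : ℝ)) := Finset.sum_le_sum step
          _ = (#N : ℝ) * (1/(1 + (#(S.filter (adj v)) : ℝ))) := by
              rw [Finset.sum_const, nsmul_eq_mul]
          _ = 1 := by
              rw [hNcard]; push_cast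
              have : (0:ℝ) < (#(S.filter (adj v)) : ℝ) + 1 := by positivity
              field_simp
              ring
          _ ≤ 1 := le_refl 1
      rw [← hsplit, hcard]
      push_cast
      linarith

/-- In a code of size ≥ d+2, any pairwise-α subset has size at most d. -/
lemma clique_bound (d n : ℕ) (hd : 2 ≤ d) (α β : ℝ) (hα : α < 1) (hβ₀ : β < 0)
    (u : Fin n → EuclideanSpace ℝ (Fin d)) (hcode : IsSphericalCode α β u)
    (hn : d + 2 ≤ n) (I : Finset (Fin n))
    (hI : ∀ i ∈ I, ∀ j ∈ I, i ≠ j → rinner (u i) (u j) = α) : #I ≤ d := by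
  by_contra hlt
  push_neg at hlt
  obtain ⟨J, hJI, hJcard⟩ := Finset.exists_subset_card_eq hlt
  have hJα : ∀ i ∈ J, ∀ j ∈ J, i ≠ j → rinner (u i) (u j) = α :=
    fun i hi j hj => hI i (hJI hi) j (hJI hj)
  have hcardJ : Fintype.card {x // x ∈ J} = d + 1 := by
    rw [Fintype.card_coe, hJcard]
  have hnli : ¬ LinearIndependent ℝ (fun x : {x // x ∈ J} => u x) := by
    intro hli
    have h1 := hli.fintype_card_le_finrank
    rw [finrank_euclideanSpace_fin, hcardJ] at h1
    omega
  obtain ⟨g, hgsum, i₀, hgi₀⟩ := Fintype.not_linearIndependent_iff.mp hnli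
  set G : ℝ := ∑ i : {x // x ∈ J}, g i with hG
  have hinner : ∀ i j : {x // x ∈ J}, rinner (u i) (u j) = if i = j then 1 else α := by
    intro i j
    by_cases h : i = j
    · subst h
      simp only [if_pos rfl]
      have := hcode.1 i
      rw [rinner, real_inner_self_eq_norm_sq, this]
      norm_num
    · rw [if_neg h]
      exact hJα i i.2 j j.2 (by exact Subtype.coe_injective.ne h)
  have key : ∀ j : {x // x ∈ J}, g j * (1 - α) + α * G = 0 := by
    intro j
    have h0 : (inner ℝ (∑ i : {x // x ∈ J}, g i • u i) (u j) : ℝ) = 0 := by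
      rw [hgsum, inner_zero_left]
    rw [sum_inner] at h0
    have h1 : ∀ i : {x // x ∈ J}, (inner ℝ (g i • u i) (u j) : ℝ)
        = α * g i + (if i = j then (1 - α) * g i else 0) := by
      intro i
      rw [real_inner_smul_left]
      have := hinner i j
      rw [rinner] at this
      rw [this]
      split <;> ring
    rw [Finset.sum_congr rfl (fun i _ => h1 i)] at h0
    rw [Finset.sum_add_distrib, ← Finset.mul_sum, Finset.sum_ite_eq' Finset.univ j
      (fun i => (1 - α) * g i)] at h0
    simp only [Finset.mem_univ, if_pos] at h0
    rw [← hG] at h0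
    linarith
  have hα1 : (1 : ℝ) - α ≠ 0 := by linarith
  set t : ℝ := α * G / (α - 1) with ht
  have hgt : ∀ j : {x // x ∈ J}, g j = t := by
    intro j
    have h2 : g j * (α - 1) = α * G := by linear_combination -key j
    rw [ht, eq_div_iff (sub_ne_zero_of_ne (ne_of_lt hα))]
    exact h2
  have hGt : G = ((d : ℝ) + 1) * t := by
    rw [hG, Finset.sum_congr rfl (fun j _ => hgt j), Finset.sum_const, Finset.card_univ,
      hcardJ, nsmul_eq_mul]
    push_cast
    ring
  have htne : t ≠ 0 := by rw [← hgt i₀]; exact hgi₀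
  have hdα : (d : ℝ) * α = -1 := by
    have := key i₀
    rw [hgt i₀, hGt] at this
    have h2 : t * ((1 - α) + α * ((d : ℝ) + 1)) = 0 := by linarith
    rcases mul_eq_zero.mp h2 with h | h
    · exact absurd h htne
    · linarith
  have hdpos : (0 : ℝ) < d := by positivity
  have hαneg : α < 0 := by
    by_contra hge
    push_neg at hge
    nlinarith
  have hsumJ : (∑ i : {x // x ∈ J}, u i.1) = 0 := by
    have : ∑ i : {x // x ∈ J}, g i • u i.1 = t • ∑ i : {x // x ∈ J}, u i.1 := by
      rw [Finset.smul_sum]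
      exact Finset.sum_congr rfl fun i _ => by rw [hgt i]
    rw [this] at hgsum
    exact (smul_eq_zero.mp hgsum).resolve_left htne
  have hJne : J ≠ Finset.univ := by
    intro h
    rw [h, Finset.card_univ, Fintype.card_fin] at hJcard
    omega
  have hex : ∃ i, i ∉ J := by
    by_contra h
    push_neg at h
    exact hJne (Finset.eq_univ_iff_forall.mpr h)
  obtain ⟨i₁, hi₁⟩ := hex
  have h0 : (inner ℝ (u i₁) (∑ i : {x // x ∈ J}, u i.1) : ℝ) = 0 := by
    rw [hsumJ, inner_zero_right]
  rw [inner_sum] at h0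
  have hneg : (∑ i : {x // x ∈ J}, (inner ℝ (u i₁) (u i.1) : ℝ)) < 0 := by
    apply Finset.sum_neg
    · intro i _
      have hne : i₁ ≠ (i : Fin n) := fun h => hi₁ (h ▸ i.2)
      rcases hcode.2 i₁ i hne with h | h
      · rw [rinner] at h; rw [h]; nlinarith
      · rw [rinner] at h; rw [h]; exact hβ₀
    · apply Finset.univ_nonempty_iff.mpr
      rw [← Fintype.card_pos_iff, hcardJ]
      omega
  rw [h0] at hneg
  exact lt_irrefl 0 hneg

/-- if `d ≥ 2` and `(α-β)/(-β) < 1 + 1/(d-1)`, then every spherical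
`{α,β}`-code in `ℝ^d` has size at most
`max {d+1, ((-α)/(α-β) + 1/d)⁻¹ · (1-β)/(α-β)}`. -/
theorem stmt16 (d : ℕ) (hd : 2 ≤ d)
    (α β : ℝ) (hβ₁ : -1 ≤ β) (hβα : β < α) (hα : α < 1) (hβ₀ : β < 0)
    (hsmall : (α - β) / (-β) < 1 + 1 / ((d : ℝ) - 1)) :
    ∀ (n : ℕ) (u : Fin n → EuclideanSpace ℝ (Fin d)), IsSphericalCode α β u →
      (n : ℝ) ≤ max ((d : ℝ) + 1)
        ((-α / (α - β) + 1 / (d : ℝ))⁻¹ * ((1 - β) / (α - β))) := by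
  intro n u hcode
  rcases le_or_gt n (d + 1) with hn | hn
  · refine le_trans ?_ (le_max_left _ _)
    exact_mod_cast hn
  have hn2 : d + 2 ≤ n := hn
  classical
  -- basic positivity facts
  have hdR : (0 : ℝ) < d := by positivity
  have hαβ : (0 : ℝ) < α - β := by linarith
  have hmb : (0 : ℝ) < -β := by linarith
  have hdm1 : (0 : ℝ) < (d : ℝ) - 1 := by
    have : (2 : ℝ) ≤ d := by exact_mod_cast hd
    linarith
  have hDpos : (0 : ℝ) < (α - β) - (d : ℝ) * α := by
    have h := (div_lt_iff₀ hmb).mp hsmall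
    have he : (1 + 1/((d:ℝ)-1)) * (-β) = -β + (-β)/((d:ℝ)-1) := by
      field_simp
      ring
    have hαlt : α < (-β)/((d:ℝ)-1) := by
      rw [he] at h
      have h2 : α < (-β)/((d:ℝ)-1) + 0 := by linarith
      linarith
    have h3 := (lt_div_iff₀ hdm1).mp hαlt
    have h4 : α * ((d:ℝ) - 1) = (d:ℝ)*α - α := by ring
    linarith [h3, h4.symm.le]
  -- the β-adjacency relation
  set adj : Fin n → Fin n → Prop := fun i j => i ≠ j ∧ rinner (u i) (u j) = β with hadj
  have hsymm : ∀ a b, adj a b → adj b a := by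
    rintro a b ⟨hne, hb⟩
    refine ⟨hne.symm, ?_⟩
    rw [rinner, real_inner_comm]
    exact hb
  have hirr : ∀ a, ¬ adj a a := fun a h => h.1 rfl
  -- Caro–Wei + clique bound: ∑ 1/(1+deg) ≤ d
  obtain ⟨I, _, hIind, hIsum⟩ := caroWei adj hsymm hirr Finset.univ
  have hIcard : #I ≤ d := by
    apply clique_bound d n hd α β hα hβ₀ u hcode hn2 I
    intro i hi j hj hne
    rcases hcode.2 i j hne with h | h
    · exact h
    · exact absurd ⟨hne, h⟩ (hIind i hi j hj)
  set bdeg : Fin n → ℕ := fun i => #(Finset.univ.filter (adj i)) with hbdeg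
  have hCW : ∑ v : Fin n, (1:ℝ)/(1 + (bdeg v : ℝ)) ≤ (d : ℝ) := by
    refine le_trans hIsum ?_
    exact_mod_cast hIcard
  -- Cauchy–Schwarz
  set b : ℝ := ∑ v : Fin n, (bdeg v : ℝ) with hb
  have hcs : ((n : ℝ))^2 ≤ ((n : ℝ) + b) * (d : ℝ) := by
    have h1 : (∑ _v : Fin n, (1:ℝ))^2
        ≤ (∑ v : Fin n, (1 + (bdeg v : ℝ))) * ∑ v : Fin n, (1:ℝ)/(1 + (bdeg v : ℝ)) := by
      apply Finset.sum_sq_le_sum_mul_sum_of_sq_eq_mul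
      · intro i _; positivity
      · intro i _; positivity
      · intro i _
        have : (0:ℝ) < 1 + (bdeg i : ℝ) := by positivity
        field_simp
    have h2 : (∑ _v : Fin n, (1:ℝ)) = (n : ℝ) := by
      rw [Finset.sum_const, Finset.card_univ, Fintype.card_fin, nsmul_eq_mul, mul_one]
    have h3 : (∑ v : Fin n, (1 + (bdeg v : ℝ))) = (n : ℝ) + b := by
      rw [Finset.sum_add_distrib, h2, hb]
    have h4 : (0:ℝ) ≤ (n : ℝ) + b := by
      rw [← h3]
      apply Finset.sum_nonneg
      intro i _; positivity
    calc ((n : ℝ))^2 = (∑ _v : Fin n, (1:ℝ))^2 := by rw [h2]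
      _ ≤ (∑ v : Fin n, (1 + (bdeg v : ℝ))) * ∑ v : Fin n, (1:ℝ)/(1 + (bdeg v : ℝ)) := h1
      _ = ((n : ℝ) + b) * ∑ v : Fin n, (1:ℝ)/(1 + (bdeg v : ℝ)) := by rw [h3]
      _ ≤ ((n : ℝ) + b) * (d : ℝ) := by
          apply mul_le_mul_of_nonneg_left hCW h4
  -- T1 : sum of all inner products is nonnegative
  have hT1 : 0 ≤ (n : ℝ) * ((1 - α) + (n : ℝ) * α) - (α - β) * b := by
    have hpsd : (0:ℝ) ≤ inner ℝ (∑ i : Fin n, u i) (∑ j : Fin n, u j) :=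
      real_inner_self_nonneg
    rw [sum_inner] at hpsd
    have hrow : ∀ i : Fin n, (inner ℝ (u i) (∑ j : Fin n, u j) : ℝ)
        = (1 - α) + (n : ℝ) * α - (α - β) * (bdeg i : ℝ) := by
      intro i
      rw [inner_sum]
      have hterm : ∀ j : Fin n, (inner ℝ (u i) (u j) : ℝ)
          = (if j = i then (1 - α) else 0) + α - (α - β) * (if adj i j then 1 else 0) := by
        intro j
        by_cases hji : j = i
        · subst hji
          rw [if_pos rfl, if_neg (hirr j)]
          have := hcode.1 j
          rw [real_inner_self_eq_norm_sq, this]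
          norm_num
        · rw [if_neg hji]
          have hne : i ≠ j := fun h => hji h.symm
          rcases hcode.2 i j hne with h | h
          · rw [rinner] at h
            have hnadj : ¬ adj i j := by
              rintro ⟨-, hc⟩
              rw [rinner] at hc
              rw [hc] at h
              exact (ne_of_lt hβα) h
            rw [h, if_neg hnadj]
            ring
          · rw [rinner] at h
            rw [h, if_pos ⟨hne, h⟩]
            ring
      rw [Finset.sum_congr rfl (fun j _ => hterm j)]
      rw [Finset.sum_sub_distrib, Finset.sum_add_distrib]
      rw [Finset.sum_ite_eq' Finset.univ i (fun _ => (1-α))]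
      simp only [Finset.mem_univ, if_pos]
      rw [Finset.sum_const, Finset.card_univ, Fintype.card_fin, nsmul_eq_mul]
      have hsb : (∑ x : Fin n, ((α - β) * if adj i x then (1:ℝ) else 0))
          = (α - β) * (bdeg i : ℝ) := by
        rw [← Finset.mul_sum, Finset.sum_boole]
      rw [hsb]
    rw [Finset.sum_congr rfl (fun i _ => hrow i)] at hpsd
    rw [Finset.sum_sub_distrib, Finset.sum_const, Finset.card_univ, Fintype.card_fin,
      nsmul_eq_mul, ← Finset.mul_sum, ← hb] at hpsd
    linarith
  -- final algebra
  have hNpos : (0 : ℝ) < n := by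
    have : 0 < n := by omega
    exact_mod_cast this
  have h1 : (α - β) * b ≤ (n:ℝ) * (1 - α) + α * (n:ℝ)^2 := by nlinarith [hT1]
  have e1 : (α - β) * ((n:ℝ)^2) ≤ (α - β) * (((n:ℝ) + b) * (d:ℝ)) :=
    mul_le_mul_of_nonneg_left hcs hαβ.le
  have e2 : (d:ℝ) * ((α - β) * b) ≤ (d:ℝ) * ((n:ℝ) * (1 - α) + α * (n:ℝ)^2) :=
    mul_le_mul_of_nonneg_left h1 hdR.le
  have e4 : (n:ℝ) * ((n:ℝ) * ((α - β) - (d:ℝ)*α)) ≤ (n:ℝ) * ((d:ℝ) * (1 - β)) := by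
    nlinarith [e1, e2]
  have hfin : (n:ℝ) * ((α - β) - (d:ℝ)*α) ≤ (d:ℝ) * (1 - β) :=
    le_of_mul_le_mul_left e4 hNpos
  -- identify the right branch
  refine le_trans ?_ (le_max_right _ _)
  have hexpr : (-α / (α - β) + 1 / (d : ℝ))⁻¹ * ((1 - β) / (α - β))
      = (d:ℝ) * (1 - β) / ((α - β) - (d:ℝ)*α) := by
    have hne1 : (α - β) ≠ 0 := ne_of_gt hαβ
    have hne2 : (d:ℝ) ≠ 0 := ne_of_gt hdR
    have hne3 : ((α - β) - (d:ℝ)*α) ≠ 0 := ne_of_gt hDpos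
    have hrw : -α / (α - β) + 1 / (d : ℝ) = ((α - β) - (d:ℝ)*α) / ((d:ℝ) * (α - β)) := by
      field_simp
      ring
    rw [hrw, inv_div]
    field_simp
  rw [hexpr, le_div_iff₀ hDpos]
  exact hfin
end
end

section
/- Let d be a positive integer, let -1 ≤ β < α < 1 with β < 0, and let k be an integer with 0 ≤ k ≤ d+1. If (1-β)/(α-β) > √(⌊(d+2-k)/2⌋ · ⌈(d+2-k)/2⌉), then every spherical {α,β}-code in ℝ^d has size at most 2^k·(d+2-k) - 1. -/
open Matrix

noncomputable section

open Finset

lemma nat_pq (p q N : ℕ) (h : p + q ≤ N) : p * q ≤ N/2 * ((N+1)/2) := by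
  have ha : N/2 + (N+1)/2 = N := by omega
  set a := N/2 with hadef
  set b := (N+1)/2 with hbdef
  have hba : a ≤ b ∧ b ≤ a + 1 := by omega
  have h4 : 4*(p*q) ≤ 4*(a*b) + 1 := by
    have hz : (4:ℤ)*(p*q) ≤ 4*(a*b) + 1 := by
      have h1 : (p:ℤ) + q ≤ a + b := by exact_mod_cast ha ▸ h
      have h2 : (a:ℤ) ≤ b := by exact_mod_cast hba.1
      have h3 : (b:ℤ) ≤ a + 1 := by exact_mod_cast hba.2
      nlinarith [sq_nonneg ((p:ℤ) - q), sq_nonneg ((a:ℤ) - b), sq_nonneg ((p:ℤ)+q)]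
    exact_mod_cast hz
  omega

lemma min_formula (x : ℝ) : min x 0 = (x - |x|)/2 := by
  rcases le_or_gt 0 x with h | h
  · rw [min_eq_right h, abs_of_nonneg h]; ring
  · rw [min_eq_left h.le, abs_of_neg h]; ring

lemma abs_sum_bound {N : ℕ} (c : Fin N → ℝ) (hs : ∑ i, c i = 0) :
    (∑ i, |c i|)^2 ≤ 2 * Real.sqrt (((N/2 : ℕ) : ℝ) * (((N+1)/2 : ℕ) : ℝ)) * (∑ i, (c i)^2) := by
  classical
  set P : Finset (Fin N) := univ.filter (fun i => 0 < c i) with hP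
  set Ng : Finset (Fin N) := univ.filter (fun i => c i < 0) with hNg
  have hdisj : Disjoint P Ng := by
    rw [Finset.disjoint_left]
    intro i hi hni
    have h1 := (mem_filter.mp hi).2
    have h2 := (mem_filter.mp hni).2
    linarith
  have key : ∀ f : Fin N → ℝ, (∀ i, c i = 0 → f i = 0) →
      ∑ i, f i = ∑ i ∈ P, f i + ∑ i ∈ Ng, f i := by
    intro f hf
    rw [← Finset.sum_union hdisj]
    refine (Finset.sum_subset (Finset.subset_univ _) ?_).symm
    intro i _ hi
    simp only [Finset.mem_union, hP, hNg, mem_filter, mem_univ, true_and, not_or, not_lt] at hi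
    exact hf i (le_antisymm hi.1 hi.2)
  set sp := ∑ i ∈ P, c i with hsp
  set sn := ∑ i ∈ Ng, (-c i) with hsn
  have hspnn : 0 ≤ sp := Finset.sum_nonneg (fun i hi => (mem_filter.mp hi).2.le)
  have hsnnn : 0 ≤ sn := Finset.sum_nonneg (fun i hi => by
    have := (mem_filter.mp hi).2; linarith)
  have hspsn : sp = sn := by
    have h0 := key c (fun i h => h)
    rw [hs] at h0
    have h2 : ∑ i ∈ Ng, c i = -sn := by rw [hsn]; simp
    linarith [h0, h2]
  have habs : ∑ i, |c i| = sp + sn := by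
    rw [key (fun i => |c i|) (fun i h => by simp [h])]
    congr 1
    · exact Finset.sum_congr rfl (fun i hi => abs_of_pos (mem_filter.mp hi).2)
    · exact Finset.sum_congr rfl (fun i hi => abs_of_neg (mem_filter.mp hi).2)
  set X := ∑ i ∈ P, (c i)^2 with hX
  set Y := ∑ i ∈ Ng, (c i)^2 with hY
  have hXnn : 0 ≤ X := Finset.sum_nonneg (fun i _ => sq_nonneg _)
  have hYnn : 0 ≤ Y := Finset.sum_nonneg (fun i _ => sq_nonneg _)
  have hXY : X + Y ≤ ∑ i, (c i)^2 := by
    rw [key (fun i => (c i)^2) (fun i h => by simp [h])]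
  have hcs1 : sp^2 ≤ P.card * X := by
    have := Finset.sum_mul_sq_le_sq_mul_sq P (fun _ => (1:ℝ)) c
    simpa [hsp, hX] using this
  have hcs2 : sn^2 ≤ Ng.card * Y := by
    have h := Finset.sum_mul_sq_le_sq_mul_sq Ng (fun _ => (1:ℝ)) c
    simp only [one_pow, one_mul, Finset.sum_const, nsmul_eq_mul] at h
    have h2 : sn^2 = (∑ i ∈ Ng, c i)^2 := by
      rw [hsn, Finset.sum_neg_distrib, neg_sq]
    rw [h2, hY]; linarith [h]
  have hcard : P.card + Ng.card ≤ N := by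
    rw [← Finset.card_union_of_disjoint hdisj]
    simpa using Finset.card_le_card (Finset.subset_univ (P ∪ Ng))
  have hpq : (P.card * Ng.card : ℕ) ≤ N/2 * ((N+1)/2) := nat_pq _ _ _ hcard
  set Q := Real.sqrt (((N/2 : ℕ) : ℝ) * (((N+1)/2 : ℕ) : ℝ)) with hQ
  have hQnn : 0 ≤ Q := Real.sqrt_nonneg _
  set W := ∑ i, (c i)^2 with hW
  have hWnn : 0 ≤ W := Finset.sum_nonneg (fun i _ => sq_nonneg _)
  have h1 : sp ≤ Real.sqrt (P.card * X) := Real.le_sqrt_of_sq_le hcs1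
  have h2 : sn ≤ Real.sqrt (Ng.card * Y) := Real.le_sqrt_of_sq_le hcs2
  have h3 : sp * sn ≤ Real.sqrt (P.card * X) * Real.sqrt (Ng.card * Y) :=
    mul_le_mul h1 h2 hsnnn (Real.sqrt_nonneg _)
  have h4 : Real.sqrt (P.card * X) * Real.sqrt (Ng.card * Y)
      = Real.sqrt ((P.card * Ng.card : ℝ) * (X * Y)) := by
    rw [← Real.sqrt_mul (by positivity)]
    congr 1
    ring
  have h5 : Real.sqrt ((P.card * Ng.card : ℝ) * (X * Y))
      = Real.sqrt ((P.card * Ng.card : ℝ)) * Real.sqrt (X * Y) :=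
    Real.sqrt_mul (by positivity) _
  have h6 : Real.sqrt ((P.card * Ng.card : ℝ)) ≤ Q := by
    rw [hQ]
    apply Real.sqrt_le_sqrt
    have : ((P.card : ℝ) * Ng.card) ≤ ((N/2 : ℕ):ℝ) * (((N+1)/2 : ℕ):ℝ) := by
      exact_mod_cast hpq
    exact_mod_cast this
  have h7 : Real.sqrt (X * Y) ≤ (X + Y)/2 := by
    have hxy2 : X * Y ≤ ((X+Y)/2)^2 := by nlinarith [sq_nonneg (X - Y)]
    calc Real.sqrt (X * Y) ≤ Real.sqrt (((X+Y)/2)^2) := Real.sqrt_le_sqrt hxy2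
      _ = (X+Y)/2 := Real.sqrt_sq (by linarith)
  have h8 : sp * sn ≤ Q * ((X+Y)/2) := by
    calc sp * sn ≤ Real.sqrt ((P.card * Ng.card : ℝ)) * Real.sqrt (X * Y) := by
          rw [← h5, ← h4]; exact h3
      _ ≤ Q * ((X+Y)/2) := by
          apply mul_le_mul h6 h7 (Real.sqrt_nonneg _) hQnn
  have hQW : Q * (X + Y) ≤ Q * W := mul_le_mul_of_nonneg_left hXY hQnn
  calc (∑ i, |c i|)^2 = 4*(sp*sn) := by rw [habs, hspsn]; ring
    _ ≤ 4*(Q*((X+Y)/2)) := by linarith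
    _ = 2*Q*(X+Y) := by ring
    _ ≤ 2*Q*W := by linarith

lemma quad_lower {N : ℕ} (c : Fin N → ℝ) (F : Fin N → Fin N → ℝ)
    (hF0 : ∀ i j, 0 ≤ F i j) (hF1 : ∀ i j, F i j ≤ 1) :
    ((∑ i, c i)^2 - (∑ i, |c i|)^2)/2 ≤ ∑ i, ∑ j, F i j * (c i * c j) := by
  have term : ∀ i j : Fin N, min (c i * c j) 0 ≤ F i j * (c i * c j) := by
    intro i j
    rcases le_or_gt 0 (c i * c j) with h | h
    · rw [min_eq_right h]; exact mul_nonneg (hF0 i j) h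
    · rw [min_eq_left h.le]
      calc c i * c j = 1 * (c i * c j) := (one_mul _).symm
        _ ≤ F i j * (c i * c j) := by
          exact mul_le_mul_of_nonpos_right (hF1 i j) h.le
  have hsum : ∑ i, ∑ j, min (c i * c j) 0 = ((∑ i, c i)^2 - (∑ i, |c i|)^2)/2 := by
    simp_rw [min_formula, abs_mul]
    simp_rw [← Finset.sum_div]
    rw [sq, sq, Finset.sum_mul_sum, Finset.sum_mul_sum]
    congr 1
    rw [← Finset.sum_sub_distrib]
    exact Finset.sum_congr rfl (fun i _ => by rw [← Finset.sum_sub_distrib])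
  rw [← hsum]
  exact Finset.sum_le_sum (fun i _ => Finset.sum_le_sum (fun j _ => term i j))

lemma base_case (d : ℕ) (α β : ℝ) (hβα : β < α) (hα : α < 1) (hβ₀ : β < 0)
    (hbig : Real.sqrt ((((d + 2)/2 : ℕ) : ℝ) * (((d + 2 + 1)/2 : ℕ) : ℝ)) < (1 - β)/(α - β))
    (n : ℕ) (u : Fin n → EuclideanSpace ℝ (Fin d)) (hu : IsSphericalCode α β u) :
    n ≤ d + 1 := by
  by_contra hlt
  push_neg at hlt
  have hn : d + 2 ≤ n := hlt
  set u' : Fin (d+2) → EuclideanSpace ℝ (Fin d) := u ∘ Fin.castLE hn with hu'def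
  set V : Fin (d+2) → (EuclideanSpace ℝ (Fin d)) × ℝ := fun i => (u' i, 1) with hVdef
  have hnotli : ¬ LinearIndependent ℝ V := by
    intro hli
    have hc := hli.fintype_card_le_finrank
    rw [Module.finrank_prod, finrank_euclideanSpace_fin, Module.finrank_self,
      Fintype.card_fin] at hc
    omega
  obtain ⟨g, hg0, i0, hgi⟩ := Fintype.not_linearIndependent_iff.mp hnotli
  -- components
  have hz : ∑ i, g i • u' i = 0 := by
    have := congrArg (LinearMap.fst ℝ (EuclideanSpace ℝ (Fin d)) ℝ) hg0
    rw [map_sum] at this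
    simpa [hVdef] using this
  have hs : ∑ i, g i = 0 := by
    have := congrArg (LinearMap.snd ℝ (EuclideanSpace ℝ (Fin d)) ℝ) hg0
    rw [map_sum] at this
    simpa [hVdef] using this
  set P : Fin (d+2) → Fin (d+2) → ℝ := fun i j => rinner (u' i) (u' j) with hPdef
  have hPdiag : ∀ i, P i i = 1 := by
    intro i
    have h1 : ‖u' i‖ = 1 := hu.1 _
    simp only [hPdef, rinner, real_inner_self_eq_norm_mul_norm, h1, mul_one]
  have hPoff : ∀ i j, i ≠ j → P i j = α ∨ P i j = β := by
    intro i j hij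
    exact hu.2 _ _ (fun h => hij (Fin.castLE_injective hn h))
  have hA1 : ∑ i, ∑ j, g i * g j * P i j = 0 := by
    have h0 : inner (𝕜 := ℝ) (∑ i, g i • u' i) (∑ j, g j • u' j) = 0 := by
      rw [hz, inner_zero_left]
    rw [sum_inner] at h0
    simp_rw [inner_sum, real_inner_smul_left, real_inner_smul_right] at h0
    rw [← h0]
    refine Finset.sum_congr rfl fun i _ => Finset.sum_congr rfl fun j _ => ?_
    simp only [hPdef, rinner]
    ring
  have hαβ : (0:ℝ) < α - β := by linarith
  set F : Fin (d+2) → Fin (d+2) → ℝ :=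
    fun i j => if i = j then 0 else (P i j - β)/(α - β) with hFdef
  have hF0 : ∀ i j, 0 ≤ F i j := by
    intro i j; by_cases h : i = j
    · simp [hFdef, h]
    · simp only [hFdef, if_neg h]
      rcases hPoff i j h with hp | hp <;> rw [hp]
      · positivity
      · simp
  have hF1 : ∀ i j, F i j ≤ 1 := by
    intro i j; by_cases h : i = j
    · simp [hFdef, h]
    · simp only [hFdef, if_neg h]
      rcases hPoff i j h with hp | hp <;> rw [hp]
      · rw [div_self hαβ.ne']
      · simp [le_of_lt hαβ]
  set W := ∑ i, (g i)^2 with hWdef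
  have hW : 0 < W := by
    have h1 : (g i0)^2 ≤ W := Finset.single_le_sum
      (f := fun i => (g i)^2) (fun i _ => sq_nonneg (g i)) (mem_univ i0)
    have h2 : 0 < (g i0)^2 := by positivity
    linarith
  set T := ∑ i, ∑ j, F i j * (g i * g j) with hTdef
  have hgg : ∑ i, ∑ j, g i * g j = 0 := by
    rw [← Finset.sum_mul_sum, hs, mul_zero]
  have hTeq : (α - β) * T = -(1-β) * W := by
    have expand : ∀ i : Fin (d+2), ∑ j, ((α - β) * (F i j * (g i * g j)))
        = ∑ j, (g i * g j * P i j - β * (g i * g j)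
            - if i = j then (1-β)*(g i)^2 else 0) := by
      intro i
      refine Finset.sum_congr rfl fun j _ => ?_
      by_cases h : i = j
      · subst h
        simp only [hFdef, if_pos rfl, hPdiag i, if_true, eq_self_iff_true]
        ring
      · simp only [hFdef, if_neg h]
        field_simp
        ring
    calc (α - β) * T = ∑ i, ∑ j, ((α-β) * (F i j * (g i * g j))) := by
          rw [hTdef, Finset.mul_sum]
          exact Finset.sum_congr rfl fun i _ => by rw [Finset.mul_sum]
      _ = ∑ i, ∑ j, (g i * g j * P i j - β * (g i * g j)
            - if i = j then (1-β)*(g i)^2 else 0) :=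
          Finset.sum_congr rfl (fun i _ => expand i)
      _ = (∑ i, ∑ j, g i * g j * P i j) - β * (∑ i, ∑ j, g i * g j) - (1-β) * W := by
          simp_rw [Finset.sum_sub_distrib, Finset.sum_ite_eq, mem_univ, if_true,
            ← Finset.mul_sum]
          try rw [← hWdef]
          try ring
      _ = -(1-β) * W := by rw [hA1, hgg]; ring
  have hT1 := quad_lower g F hF0 hF1
  rw [hs] at hT1
  set S := ∑ i, |g i| with hSdef
  have habs := abs_sum_bound g hs
  set Q := Real.sqrt ((((d + 2)/2 : ℕ) : ℝ) * (((d + 2 + 1)/2 : ℕ) : ℝ)) with hQdef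
  have h1 : -(S^2)/2 ≤ T := by
    have : (0^2 - S^2)/2 = -(S^2)/2 := by ring
    rw [this] at hT1
    exact hT1
  have h2 : (α-β) * (-(S^2)/2) ≤ (α-β) * T := mul_le_mul_of_nonneg_left h1 hαβ.le
  rw [hTeq] at h2
  have h3 : S^2 ≤ 2 * Q * W := habs
  have h4 : (α-β) * (S^2/2) ≤ (α-β) * (Q*W) :=
    mul_le_mul_of_nonneg_left (by linarith) hαβ.le
  have h6 : (1-β) * W ≤ ((α-β)*Q) * W := by nlinarith
  have h7 : (1-β) ≤ (α-β)*Q := le_of_mul_le_mul_right h6 hW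
  have h8 : (1-β)/(α-β) ≤ Q := by rw [div_le_iff₀ hαβ]; linarith
  linarith [hbig, h8]

lemma project (d : ℕ) (u0 : EuclideanSpace ℝ (Fin (d+1))) (hu0 : ‖u0‖ = 1)
    (γ : ℝ) (hγ1 : -1 < γ) (hγ2 : γ < 1)
    (m : ℕ) (v : Fin m → EuclideanSpace ℝ (Fin (d+1)))
    (hv : ∀ i, ‖v i‖ = 1) (hvγ : ∀ i, rinner (v i) u0 = γ) :
    ∃ w : Fin m → EuclideanSpace ℝ (Fin d),
      (∀ i, ‖w i‖ = 1) ∧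
      ∀ i j, rinner (w i) (w j) = (rinner (v i) (v j) - γ^2)/(1 - γ^2) := by
  have hγsq : 0 < 1 - γ^2 := by nlinarith
  set V := (ℝ ∙ u0)ᗮ with hVdef
  have hu0ne : u0 ≠ 0 := by
    intro h; rw [h, norm_zero] at hu0; norm_num at hu0
  have hdim : Module.finrank ℝ V = d := by
    rw [hVdef]
    have h1 := Submodule.finrank_add_finrank_orthogonal (K := (ℝ ∙ u0))
    rw [finrank_span_singleton hu0ne, finrank_euclideanSpace_fin] at h1
    omega
  set ob := (stdOrthonormalBasis ℝ V).reindex (finCongr hdim) with hobdef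
  have hmem : ∀ i, (Real.sqrt (1-γ^2))⁻¹ • (v i - γ • u0) ∈ V := by
    intro i
    apply Submodule.smul_mem
    rw [hVdef, Submodule.mem_orthogonal_singleton_iff_inner_right]
    rw [inner_sub_right, real_inner_smul_right]
    have h1 : inner (𝕜 := ℝ) u0 (v i) = γ := by
      rw [real_inner_comm]; exact hvγ i
    have h2 : inner (𝕜 := ℝ) u0 u0 = 1 := by
      rw [real_inner_self_eq_norm_mul_norm, hu0]; norm_num
    rw [h1, h2]; ring
  set wraw : Fin m → V := fun i => ⟨_, hmem i⟩ with hwrawdef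
  set w : Fin m → EuclideanSpace ℝ (Fin d) := fun i => ob.repr (wraw i) with hwdef
  have hprod : ∀ i j, rinner (w i) (w j) = (rinner (v i) (v j) - γ^2)/(1 - γ^2) := by
    intro i j
    have h0 : rinner (w i) (w j) = inner (𝕜 := ℝ) (wraw i) (wraw j) := by
      rw [hwdef]
      exact ob.repr.inner_map_map (wraw i) (wraw j)
    rw [h0, hwrawdef]
    have hc : inner (𝕜 := ℝ) ((⟨(Real.sqrt (1-γ^2))⁻¹ • (v i - γ • u0), hmem i⟩ : V))
        (⟨(Real.sqrt (1-γ^2))⁻¹ • (v j - γ • u0), hmem j⟩ : V)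
        = inner (𝕜 := ℝ) ((Real.sqrt (1-γ^2))⁻¹ • (v i - γ • u0))
          ((Real.sqrt (1-γ^2))⁻¹ • (v j - γ • u0)) := rfl
    rw [hc, real_inner_smul_left, real_inner_smul_right]
    have hexp : inner (𝕜 := ℝ) (v i - γ • u0) (v j - γ • u0)
        = rinner (v i) (v j) - γ^2 := by
      rw [inner_sub_left, inner_sub_right, inner_sub_right]
      rw [real_inner_smul_right, real_inner_smul_left, real_inner_smul_left,
        real_inner_smul_right]
      have h1 : inner (𝕜 := ℝ) (v i) u0 = γ := hvγ i
      have h2 : inner (𝕜 := ℝ) u0 (v j) = γ := by rw [real_inner_comm]; exact hvγ j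
      have h3 : inner (𝕜 := ℝ) u0 u0 = 1 := by
        rw [real_inner_self_eq_norm_mul_norm, hu0]; norm_num
      rw [h1, h2, h3, rinner]
      ring
    rw [hexp]
    have hsq : Real.sqrt (1-γ^2) * Real.sqrt (1-γ^2) = 1 - γ^2 :=
      Real.mul_self_sqrt hγsq.le
    have hne : Real.sqrt (1-γ^2) ≠ 0 := by positivity
    rw [eq_div_iff hγsq.ne', ← hsq]
    field_simp
    rw [Real.sq_sqrt hγsq.le, Real.sq_sqrt hγsq.le]
  refine ⟨w, ?_, hprod⟩
  intro i
  have h1 : rinner (w i) (w i) = 1 := by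
    rw [hprod i i]
    have : rinner (v i) (v i) = 1 := by
      rw [rinner, real_inner_self_eq_norm_mul_norm, hv i]; norm_num
    rw [this]
    field_simp
  rw [rinner, real_inner_self_eq_norm_mul_norm] at h1
  nlinarith [norm_nonneg (w i)]

lemma dim0 {n : ℕ} (u : Fin n → EuclideanSpace ℝ (Fin 0)) (h : ∀ i, ‖u i‖ = 1) : n = 0 := by
  by_contra h0
  have hpos : 0 < n := Nat.pos_of_ne_zero h0
  have hn := h ⟨0, hpos⟩
  rw [EuclideanSpace.norm_eq] at hn
  simp at hn

lemma main_lemma : ∀ (k d : ℕ) (α β : ℝ), β < α → α < 1 → β < 0 → k ≤ d + 1 →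
    (Real.sqrt ((((d + 2 - k) / 2 : ℕ) : ℝ) * (((d + 2 - k + 1) / 2 : ℕ) : ℝ))
      < (1 - β) / (α - β)) →
    ∀ (n : ℕ) (u : Fin n → EuclideanSpace ℝ (Fin d)), IsSphericalCode α β u →
      n ≤ 2 ^ k * (d + 2 - k) - 1 := by
  intro k
  induction k with
  | zero =>
    intro d α β hβα hα hβ₀ _ hbig n u hu
    simp only [Nat.sub_zero] at hbig ⊢
    rw [pow_zero, one_mul]
    have := base_case d α β hβα hα hβ₀ hbig n u hu
    omega
  | succ k ih =>
    intro d α β hβα hα hβ₀ hk hbig n u hu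
    rcases d with _ | e
    · rw [dim0 u hu.1]; exact Nat.zero_le _
    have hke : k ≤ e + 1 := by omega
    have hmeq : e + 1 + 2 - (k + 1) = e + 2 - k := by omega
    rw [hmeq] at hbig ⊢
    have hm1 : 1 ≤ e + 2 - k := by omega
    have h2X : 2 ≤ 2 ^ k * (e + 2 - k) := by
      rcases Nat.eq_zero_or_pos k with hk0 | hkpos
      · subst hk0; simpa using by omega
      · have h1 : 2 ≤ 2^k := Nat.one_lt_two_pow_iff.mpr hkpos.ne'
        calc 2 ≤ 2^k := h1
          _ = 2^k * 1 := (mul_one _).symm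
          _ ≤ 2^k * (e + 2 - k) := Nat.mul_le_mul_left _ hm1
    rcases Nat.eq_zero_or_pos n with hn0 | hnpos
    · subst hn0; exact Nat.zero_le _
    set i0 : Fin n := ⟨0, hnpos⟩ with hi0def
    set u0 := u i0 with hu0def
    have hu0 : ‖u0‖ = 1 := hu.1 i0
    -- generic bound for the γ-neighborhood
    have key : ∀ γ : ℝ, (γ = α ∨ γ = β) → ∀ S : Finset (Fin n),
        (∀ i ∈ S, i ≠ i0 ∧ rinner (u i) u0 = γ) → S.card ≤ 2 ^ k * (e + 2 - k) - 1 := by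
      intro γ hγab S hS
      have hγ1 : γ < 1 := by rcases hγab with h | h <;> subst h <;> linarith
      rcases le_or_gt γ (-1) with hγle | hγgt
      · -- γ ≤ -1 : S has at most one element
        have hone : ∀ i ∈ S, u i = -u0 := by
          intro i hi
          obtain ⟨hne, hγi⟩ := hS i hi
          have habs : |rinner (u i) u0| ≤ 1 := by
            have := abs_real_inner_le_norm (u i) u0
            rw [hu.1 i, hu0, one_mul] at this
            exact this
          have hγeq : γ = -1 := by
            rw [hγi] at habs
            cases abs_le.mp habs
            linarith
          have hnorm : ‖u i + u0‖^2 = 0 := by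
            rw [norm_add_sq_real, hu.1 i, hu0, show inner ℝ (u i) u0 = γ from hγi, hγeq]
            norm_num
          have : u i + u0 = 0 := by
            have := sq_eq_zero_iff.mp hnorm
            exact norm_eq_zero.mp this
          linear_combination (norm := module) this
        have hcard1 : S.card ≤ 1 := by
          rw [Finset.card_le_one]
          intro a ha b hb
          by_contra hab
          have h1 := hu.2 a b hab
          rw [hone a ha, hone b hb] at h1
          have h2 : rinner (-u0) (-u0) = 1 := by
            rw [rinner, inner_neg_neg, real_inner_self_eq_norm_mul_norm, hu0]; norm_num
          rw [h2] at h1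
          rcases h1 with h | h <;> linarith
        omega
      · -- -1 < γ < 1 : project and use IH
        set m' := S.card with hm'def
        set es := S.equivFin with hesdef
        set v : Fin m' → EuclideanSpace ℝ (Fin (e+1)) := fun t => u (es.symm t) with hvdef
        have hv1 : ∀ t, ‖v t‖ = 1 := fun t => hu.1 _
        have hv2 : ∀ t, rinner (v t) u0 = γ := fun t => (hS _ (es.symm t).2).2
        have hvnei : ∀ t t' : Fin m', t ≠ t' → ((es.symm t : Fin n) ≠ (es.symm t' : Fin n)) := by
          intro t t' htt h
          exact htt (by
            have := Subtype.ext (p := fun i => i ∈ S) h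
            exact es.symm.injective this)
        obtain ⟨w, hw1, hw2⟩ := project e u0 hu0 γ hγgt hγ1 m' v hv1 hv2
        have hγsq : 0 < 1 - γ^2 := by nlinarith
        set α' := (α - γ^2)/(1 - γ^2) with hα'def
        set β' := (β - γ^2)/(1 - γ^2) with hβ'def
        have hcode : IsSphericalCode α' β' w := by
          constructor
          · exact hw1
          · intro t t' htt
            rw [hw2 t t']
            rcases hu.2 _ _ (hvnei t t' htt) with h | h
            · left; rw [hα'def]
              congr 1
              simp only [hvdef]
              rw [h]
            · right; rw [hβ'def]
              congr 1
              simp only [hvdef]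
              rw [h]
        have hβα' : β' < α' := by
          rw [hα'def, hβ'def, div_lt_div_iff_of_pos_right hγsq]
          linarith
        have hα'1 : α' < 1 := by
          rw [hα'def, div_lt_one hγsq]
          linarith
        have hβ'0 : β' < 0 := by
          rw [hβ'def]
          exact div_neg_of_neg_of_pos (by nlinarith) hγsq
        have hαβ'pos : 0 < α' - β' := by linarith
        have hαβpos : 0 < α - β := by linarith
        have hratio : (1 - β') / (α' - β') = (1 - β) / (α - β) := by
          rw [div_eq_div_iff hαβ'pos.ne' hαβpos.ne', hα'def, hβ'def]
          field_simp
          try ring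
        have hbig' : Real.sqrt ((((e + 2 - k) / 2 : ℕ) : ℝ) * (((e + 2 - k + 1) / 2 : ℕ) : ℝ))
            < (1 - β') / (α' - β') := by
          rw [hratio]
          exact hbig
        have := ih e α' β' hβα' hα'1 hβ'0 hke hbig' m' w hcode
        omega
    -- combine
    set Sa : Finset (Fin n) := univ.filter (fun i => i ≠ i0 ∧ rinner (u i) u0 = α) with hSadef
    set Sb : Finset (Fin n) := univ.filter (fun i => i ≠ i0 ∧ rinner (u i) u0 = β) with hSbdef
    have hka := key α (Or.inl rfl) Sa (fun i hi => (mem_filter.mp hi).2)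
    have hkb := key β (Or.inr rfl) Sb (fun i hi => (mem_filter.mp hi).2)
    have hcover : (univ : Finset (Fin n)) ⊆ {i0} ∪ Sa ∪ Sb := by
      intro i _
      rcases eq_or_ne i i0 with h | h
      · subst h; simp
      · rcases hu.2 i i0 h with hp | hp
        · simp only [Finset.mem_union, hSadef, mem_filter, mem_univ, true_and]
          left; right; exact ⟨h, hp⟩
        · simp only [Finset.mem_union, hSbdef, mem_filter, mem_univ, true_and]
          right; exact ⟨h, hp⟩
    have hcount : n ≤ 1 + Sa.card + Sb.card := by
      have h1 := Finset.card_le_card hcover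
      have h2 := Finset.card_union_le ({i0} ∪ Sa) Sb
      have h3 := Finset.card_union_le ({i0} : Finset (Fin n)) Sa
      simp only [Finset.card_univ, Fintype.card_fin, Finset.card_singleton] at h1 h2 h3
      omega
    have hpow : 2 ^ (k+1) * (e + 2 - k) = 2 * (2 ^ k * (e + 2 - k)) := by
      rw [pow_succ]; ring
    omega

/-- if `0 ≤ k ≤ d+1` and `(1-β)/(α-β) > √(⌊(d+2-k)/2⌋·⌈(d+2-k)/2⌉)`, then
every spherical `{α,β}`-code in `ℝ^d` has size at most `2^k·(d+2-k) - 1`. -/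
theorem stmt17 (d : ℕ) (hd : 0 < d)
    (α β : ℝ) (hβ₁ : -1 ≤ β) (hβα : β < α) (hα : α < 1) (hβ₀ : β < 0)
    (k : ℕ) (hk : k ≤ d + 1)
    (hbig : (1 - β) / (α - β) >
      Real.sqrt ((((d + 2 - k) / 2 : ℕ) : ℝ) * (((d + 2 - k + 1) / 2 : ℕ) : ℝ))) :
    ∀ (n : ℕ) (u : Fin n → EuclideanSpace ℝ (Fin d)), IsSphericalCode α β u →
      n ≤ 2 ^ k * (d + 2 - k) - 1 := by
  intro n u hu
  exact main_lemma k d α β hβα hα hβ₀ hk hbig n u hu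
end
end
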